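/- arXiv:1707.02939 — 6 statements merged into one kernel-verified Lean document; each statement's English description precedes it below -/
import Mathlib

section
/- Let p ≤ N be a positive natural number and let k₁, …, k_p ∈ ℕ with k = k₁ + ⋯ + k_p. Then ℙ-almost surely, E[X₁^{k₁} ⋯ X_p^{k_p} | S] = ((a)_{k₁} ⋯ (a)_{k_p} / (N·a)_k) · S^k. -/
open MeasureTheory ProbabilityTheory Real Set intervalIntegral
open scoped ENNReal

namespace GammaCondExpAux

lemma poch_pos {a : ℝ} (ha : 0 < a) (k : ℕ) : 0 < (ascPochhammer ℝ k).eval a :=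
  ascPochhammer_pos k a ha

lemma Gamma_add_nat {a : ℝ} (ha : 0 < a) (k : ℕ) :
    Real.Gamma (a + k) = (ascPochhammer ℝ k).eval a * Real.Gamma a := by
  induction k with
  | zero => simp
  | succ n ih =>
    have hane : a + n ≠ 0 := by positivity
    have : a + (n + 1 : ℕ) = (a + n) + 1 := by push_cast; ring
    rw [this, Real.Gamma_add_one hane, ih, ascPochhammer_succ_eval]
    ring

lemma gammaPDFReal_tilt {a r : ℝ} (ha : 0 < a) (hr : 0 < r) (k : ℕ) {x : ℝ} (hx : 0 < x) :
    x ^ k * gammaPDFReal a r x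
      = ((ascPochhammer ℝ k).eval a / r ^ k) * gammaPDFReal (a + k) r x := by
  have hpoch := poch_pos ha k
  have hG : 0 < Real.Gamma a := Real.Gamma_pos_of_pos ha
  rw [gammaPDFReal, gammaPDFReal, if_pos hx.le, if_pos hx.le]
  have h1 : x ^ (a + (k : ℝ) - 1) = x ^ (a - 1) * x ^ k := by
    rw [← Real.rpow_natCast x k, ← Real.rpow_add hx]; ring_nf
  have h2 : r ^ (a + (k : ℝ)) = r ^ a * r ^ k := by
    rw [← Real.rpow_natCast r k, ← Real.rpow_add hr]
  have h3 : Real.Gamma (a + k) = (ascPochhammer ℝ k).eval a * Real.Gamma a :=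
    Gamma_add_nat ha k
  have hrk : (0:ℝ) < r ^ k := by positivity
  rw [h1, h2, h3]
  field_simp

lemma gammaPDF_tilt {a r : ℝ} (ha : 0 < a) (hr : 0 < r) (k : ℕ) :
    ∀ᵐ x ∂(volume : Measure ℝ),
      ENNReal.ofReal (x ^ k) * gammaPDF a r x
        = ENNReal.ofReal ((ascPochhammer ℝ k).eval a / r ^ k) * gammaPDF (a + k) r x := by
  filter_upwards [compl_mem_ae_iff.2 (volume_singleton (a := (0:ℝ)))] with x hx
  rcases lt_or_gt_of_ne (by simpa using hx : x ≠ 0) with h | h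
  · rw [gammaPDF_of_neg h, gammaPDF_of_neg h, mul_zero, mul_zero]
  · rw [gammaPDF, gammaPDF, ← ENNReal.ofReal_mul (by positivity),
      ← ENNReal.ofReal_mul (le_of_lt (div_pos (poch_pos ha k) (by positivity))),
      gammaPDFReal_tilt ha hr k h]

lemma gamma_tilt_measure {a r : ℝ} (ha : 0 < a) (hr : 0 < r) (k : ℕ) :
    (gammaMeasure a r).withDensity (fun x => ENNReal.ofReal (x ^ k))
      = ENNReal.ofReal ((ascPochhammer ℝ k).eval a / r ^ k) • gammaMeasure (a + k) r := by
  have hm : Measurable (gammaPDF a r) := (measurable_gammaPDFReal a r).ennreal_ofReal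
  rw [gammaMeasure, gammaMeasure, ← withDensity_mul _ hm (by fun_prop),
    ← withDensity_smul' _ _ ENNReal.ofReal_ne_top]
  refine withDensity_congr_ae ?_
  filter_upwards [gammaPDF_tilt ha hr k] with x hx
  simpa [mul_comm] using hx

lemma lintegral_pow_mul {a r : ℝ} (ha : 0 < a) (hr : 0 < r) (k : ℕ)
    {g : ℝ → ℝ≥0∞} (hg : Measurable g) :
    ∫⁻ x, ENNReal.ofReal (x ^ k) * g x ∂(gammaMeasure a r)
      = ENNReal.ofReal ((ascPochhammer ℝ k).eval a / r ^ k)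
          * ∫⁻ x, g x ∂(gammaMeasure (a + k) r) := by
  have := lintegral_withDensity_eq_lintegral_mul (gammaMeasure a r)
    (f := fun x => ENNReal.ofReal (x ^ k)) (by fun_prop) hg
  simp only [Pi.mul_apply] at this
  rw [← this, gamma_tilt_measure ha hr k, lintegral_smul_measure, smul_eq_mul]

lemma gamma_set_moment {a r : ℝ} (ha : 0 < a) (hr : 0 < r) (k : ℕ)
    {B : Set ℝ} (hB : MeasurableSet B) :
    ∫⁻ x in B, ENNReal.ofReal (x ^ k) ∂(gammaMeasure a r)
      = ENNReal.ofReal ((ascPochhammer ℝ k).eval a / r ^ k) * gammaMeasure (a + k) r B := by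
  rw [← withDensity_apply _ hB, gamma_tilt_measure ha hr k]; rfl

lemma gamma_moment {a r : ℝ} (ha : 0 < a) (hr : 0 < r) (k : ℕ) :
    ∫⁻ x, ENNReal.ofReal (x ^ k) ∂(gammaMeasure a r)
      = ENNReal.ofReal ((ascPochhammer ℝ k).eval a / r ^ k) := by
  haveI := isProbabilityMeasure_gammaMeasure (show (0:ℝ) < a + k by positivity) hr
  have := gamma_set_moment ha hr k MeasurableSet.univ
  simpa [measure_univ] using this

lemma gamma_Iic_zero {a r : ℝ} : gammaMeasure a r (Iic 0) = 0 := by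
  have h1 : gammaMeasure a r (Iio 0) = 0 := by
    rw [gammaMeasure, withDensity_apply _ measurableSet_Iio]
    rw [setLIntegral_congr_fun_ae (g := fun _ => 0) measurableSet_Iio]
    · simp
    · exact ae_of_all _ fun x (hx : x < 0) => gammaPDF_of_neg hx
  have h2 : gammaMeasure a r {(0:ℝ)} = 0 :=
    withDensity_absolutelyContinuous _ _ (volume_singleton)
  have : gammaMeasure a r (Iic 0) ≤ gammaMeasure a r (Iio 0) + gammaMeasure a r {0} := by
    have : Iic (0:ℝ) = Iio 0 ∪ {0} := by ext x; simp [le_iff_lt_or_eq]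
    rw [this]; exact measure_union_le _ _
  simpa [h1, h2] using le_antisymm (by simpa [h1, h2] using this) zero_le

lemma gamma_ae_pos {a r : ℝ} : ∀ᵐ x ∂(gammaMeasure a r), 0 < x := by
  rw [ae_iff]
  have : {x : ℝ | ¬ 0 < x} = Iic 0 := by ext x; simp
  rw [this]; exact gamma_Iic_zero

lemma betaIntegral_real {a a' : ℝ} (ha : 0 < a) (ha' : 0 < a') :
    Complex.betaIntegral a a'
      = ((∫ x in (0:ℝ)..1, x ^ (a-1) * (1-x) ^ (a'-1) : ℝ) : ℂ) := by
  rw [Complex.betaIntegral, ← intervalIntegral.integral_ofReal]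
  refine intervalIntegral.integral_congr fun x hx => ?_
  rw [uIcc_of_le zero_le_one] at hx
  have h1 : ((x ^ (a-1) : ℝ) : ℂ) = (x : ℂ) ^ ((a : ℂ) - 1) := by
    rw [Complex.ofReal_cpow hx.1]; norm_num
  have h2 : (((1-x) ^ (a'-1) : ℝ) : ℂ) = ((1 : ℂ) - x) ^ ((a' : ℂ) - 1) := by
    rw [Complex.ofReal_cpow (by linarith [hx.2])]; push_cast; norm_num
  push_cast
  rw [← h1, ← h2]

lemma integral_beta01 {a a' : ℝ} (ha : 0 < a) (ha' : 0 < a') :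
    ∫ x in (0:ℝ)..1, x ^ (a-1) * (1-x) ^ (a'-1)
      = Real.Gamma a * Real.Gamma a' / Real.Gamma (a + a') := by
  have h := Complex.Gamma_mul_Gamma_eq_betaIntegral (s := a) (t := a') (by simpa) (by simpa)
  rw [betaIntegral_real ha ha'] at h
  have hsum : ((a : ℂ) + a') = ((a + a' : ℝ) : ℂ) := by push_cast; ring
  rw [hsum, Complex.Gamma_ofReal, Complex.Gamma_ofReal, Complex.Gamma_ofReal,
    ← Complex.ofReal_mul, ← Complex.ofReal_mul] at h
  have h' := Complex.ofReal_inj.mp h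
  have hG : Real.Gamma (a + a') ≠ 0 := (Real.Gamma_pos_of_pos (by linarith)).ne'
  field_simp
  linarith [h']

lemma intervalIntegrable_beta01 {a a' : ℝ} (ha : 0 < a) (ha' : 0 < a') :
    IntervalIntegrable (fun x : ℝ => x ^ (a-1) * (1-x) ^ (a'-1)) volume 0 1 := by
  have h := (Complex.betaIntegral_convergent (u := a) (v := a') (by simpa) (by simpa)).norm
  rw [intervalIntegrable_iff_integrableOn_Ioc_of_le zero_le_one] at h ⊢
  refine h.congr ?_
  filter_upwards [ae_restrict_mem measurableSet_Ioc,
    ae_restrict_of_ae (compl_mem_ae_iff.2 (volume_singleton (a := (1:ℝ))))] with x hx hx1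
  have hx' : x ∈ Ioo (0:ℝ) 1 := ⟨hx.1, lt_of_le_of_ne hx.2 (by simpa using hx1)⟩
  have h1x : (1 : ℂ) - (x : ℂ) = ((1 - x : ℝ) : ℂ) := by push_cast; ring
  rw [norm_mul, h1x,
    Complex.norm_cpow_eq_rpow_re_of_pos hx'.1, Complex.norm_cpow_eq_rpow_re_of_pos (by linarith [hx'.2])]
  norm_num

lemma beta_scaled_eqOn {a a' s : ℝ} (hs : 0 < s) {x : ℝ} (hx : x ∈ Icc 0 s) :
    x ^ (a-1) * (s-x) ^ (a'-1)
      = (s ^ (a-1) * s ^ (a'-1)) * ((x * s⁻¹) ^ (a-1) * (1 - x * s⁻¹) ^ (a'-1)) := by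
  have h1 : 1 - x * s⁻¹ = (s - x) / s := by field_simp
  have h2 : x * s⁻¹ = x / s := by rw [div_eq_mul_inv]
  rw [h1, h2, Real.div_rpow hx.1 hs.le, Real.div_rpow (by linarith [hx.2]) hs.le]
  have e1 : s ^ (a-1) ≠ 0 := (Real.rpow_pos_of_pos hs _).ne'
  have e2 : s ^ (a'-1) ≠ 0 := (Real.rpow_pos_of_pos hs _).ne'
  field_simp

lemma integrableOn_beta_scaled {a a' s : ℝ} (ha : 0 < a) (ha' : 0 < a') (hs : 0 < s) :
    IntegrableOn (fun x : ℝ => x ^ (a-1) * (s-x) ^ (a'-1)) (Ioc 0 s) volume := by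
  have h := ((intervalIntegrable_beta01 ha ha').comp_mul_right (c := s⁻¹)).const_mul
    (s ^ (a-1) * s ^ (a'-1))
  rw [show (0:ℝ) / s⁻¹ = 0 by simp, show (1:ℝ) / s⁻¹ = s by simp,
    intervalIntegrable_iff_integrableOn_Ioc_of_le hs.le] at h
  refine h.congr ?_
  filter_upwards [ae_restrict_mem measurableSet_Ioc] with x hx
  exact (beta_scaled_eqOn hs (Ioc_subset_Icc_self hx)).symm

lemma integral_beta_scaled {a a' s : ℝ} (ha : 0 < a) (ha' : 0 < a') (hs : 0 < s) :
    ∫ x in Ioc 0 s, x ^ (a-1) * (s-x) ^ (a'-1)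
      = s ^ (a+a'-1) * (Real.Gamma a * Real.Gamma a' / Real.Gamma (a + a')) := by
  rw [← intervalIntegral.integral_of_le hs.le]
  rw [intervalIntegral.integral_congr (g := fun x =>
      (s ^ (a-1) * s ^ (a'-1)) * ((x / s) ^ (a-1) * (1 - x / s) ^ (a'-1)))
    (fun x hx => by
      rw [uIcc_of_le hs.le] at hx
      simpa [div_eq_mul_inv] using beta_scaled_eqOn (a := a) (a' := a') hs hx)]
  rw [intervalIntegral.integral_const_mul,
    intervalIntegral.integral_comp_div (f := fun u => u ^ (a-1) * (1-u) ^ (a'-1)) hs.ne',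
    zero_div, div_self hs.ne', integral_beta01 ha ha', smul_eq_mul]
  have : s ^ (a-1) * s ^ (a'-1) * s = s ^ (a+a'-1) := by
    rw [← Real.rpow_add hs, ← Real.rpow_add_one hs.ne']
    ring_nf
  rw [← mul_assoc, this]

lemma conv_density {a a' r : ℝ} (ha : 0 < a) (ha' : 0 < a') (hr : 0 < r) {s : ℝ} (hs : s ≠ 0) :
    ∫⁻ x, gammaPDF a r x * gammaPDF a' r (s - x) = gammaPDF (a + a') r s := by
  have hGa : 0 < Real.Gamma a := Real.Gamma_pos_of_pos ha
  have hGa' : 0 < Real.Gamma a' := Real.Gamma_pos_of_pos ha'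
  have hGaa' : 0 < Real.Gamma (a + a') := Real.Gamma_pos_of_pos (by linarith)
  rcases hs.lt_or_gt with h | h
  · rw [gammaPDF_of_neg h]
    have hz : ∀ x : ℝ, gammaPDF a r x * gammaPDF a' r (s - x) = 0 := fun x => by
      rcases lt_or_ge x 0 with hx | hx
      · rw [gammaPDF_of_neg hx, zero_mul]
      · rw [gammaPDF_of_neg (by linarith : s - x < 0), mul_zero]
    simp [hz]
  · set C1 : ℝ := r ^ a / Real.Gamma a * (r ^ a' / Real.Gamma a') * exp (-(r*s)) with hC1
    have hC1pos : 0 < C1 := by positivity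
    have hmeas : MeasurableSet (Ioc (0:ℝ) s) := measurableSet_Ioc
    rw [← lintegral_add_compl (fun x => gammaPDF a r x * gammaPDF a' r (s - x)) hmeas]
    have hcompl : ∫⁻ x in (Ioc (0:ℝ) s)ᶜ, gammaPDF a r x * gammaPDF a' r (s - x) = 0 := by
      rw [setLIntegral_congr_fun_ae (g := fun _ => (0:ℝ≥0∞)) hmeas.compl ?_, lintegral_zero]
      filter_upwards [compl_mem_ae_iff.2 (volume_singleton (a := (0:ℝ)))] with x hx0 hx
      simp only [mem_compl_iff, mem_Ioc, not_and_or, not_lt, not_le] at hx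
      rcases hx with hx | hx
      · have : x < 0 := lt_of_le_of_ne hx (by simpa using hx0)
        rw [gammaPDF_of_neg this, zero_mul]
      · rw [gammaPDF_of_neg (by linarith : s - x < 0), mul_zero]
    have hIoc : ∫⁻ x in Ioc (0:ℝ) s, gammaPDF a r x * gammaPDF a' r (s - x)
        = ENNReal.ofReal (C1 * (s ^ (a+a'-1)
            * (Real.Gamma a * Real.Gamma a' / Real.Gamma (a + a')))) := by
      rw [setLIntegral_congr_fun_ae (g := fun x =>
          ENNReal.ofReal (C1 * (x ^ (a-1) * (s-x) ^ (a'-1)))) hmeas ?_]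
      · simp_rw [ENNReal.ofReal_mul hC1pos.le]
        rw [lintegral_const_mul' _ _ ENNReal.ofReal_ne_top,
          ← ofReal_integral_eq_lintegral_ofReal (integrableOn_beta_scaled ha ha' h) ?_,
          integral_beta_scaled ha ha' h, ← ENNReal.ofReal_mul hC1pos.le]
        filter_upwards [ae_restrict_mem hmeas] with x hx
        have h1 : (0:ℝ) ≤ x ^ (a-1) := Real.rpow_nonneg hx.1.le _
        have h2 : (0:ℝ) ≤ (s-x) ^ (a'-1) := Real.rpow_nonneg (by linarith [hx.2]) _
        exact mul_nonneg h1 h2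
      · refine ae_of_all _ fun x hx => ?_
        rw [gammaPDF_of_nonneg hx.1.le, gammaPDF_of_nonneg (by linarith [hx.2] : (0:ℝ) ≤ s - x),
          ← ENNReal.ofReal_mul (mul_nonneg (mul_nonneg (div_nonneg
            (Real.rpow_nonneg hr.le a) hGa.le) (Real.rpow_nonneg hx.1.le _)) (Real.exp_nonneg _))]
        congr 1
        have hexp : exp (-(r*x)) * exp (-(r*(s-x))) = exp (-(r*s)) := by
          rw [← Real.exp_add]; ring_nf
        calc r ^ a / Real.Gamma a * x ^ (a-1) * exp (-(r*x))
              * (r ^ a' / Real.Gamma a' * (s-x) ^ (a'-1) * exp (-(r*(s-x))))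
            = (r ^ a / Real.Gamma a * (r ^ a' / Real.Gamma a')
                * (exp (-(r*x)) * exp (-(r*(s-x))))) * (x ^ (a-1) * (s-x) ^ (a'-1)) := by ring
          _ = C1 * (x ^ (a-1) * (s-x) ^ (a'-1)) := by rw [hexp]
    rw [hcompl, add_zero, hIoc, gammaPDF_of_nonneg h.le]
    congr 1
    have hra : r ^ (a + a') = r ^ a * r ^ a' := Real.rpow_add hr a a'
    rw [hC1, hra]
    field_simp

lemma gammaMeasure_conv {a a' r : ℝ} (ha : 0 < a) (ha' : 0 < a') (hr : 0 < r) :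
    Measure.map (fun q : ℝ × ℝ => q.1 + q.2)
        ((gammaMeasure a r).prod (gammaMeasure a' r)) = gammaMeasure (a + a') r := by
  haveI := isProbabilityMeasure_gammaMeasure ha hr
  haveI := isProbabilityMeasure_gammaMeasure ha' hr
  have hf : Measurable (gammaPDF a r) := (measurable_gammaPDFReal a r).ennreal_ofReal
  have hf' : Measurable (gammaPDF a' r) := (measurable_gammaPDFReal a' r).ennreal_ofReal
  ext B hB
  have hadd : Measurable fun q : ℝ × ℝ => q.1 + q.2 := measurable_add
  set g : ℝ → ℝ≥0∞ := B.indicator 1 with hg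
  have hgmeas : Measurable g := measurable_one.indicator hB
  have hgne : ∀ u, g u ≠ ∞ := fun u => by
    rw [hg]; by_cases hu : u ∈ B <;> simp [Set.indicator_apply, hu]
  rw [Measure.map_apply hadd hB, Measure.prod_apply (hadd hB)]
  have step1 : ∀ x : ℝ, gammaMeasure a' r (Prod.mk x ⁻¹' ((fun q : ℝ × ℝ => q.1 + q.2) ⁻¹' B))
      = ∫⁻ u, g u * gammaPDF a' r (u - x) := by
    intro x
    have hset : (Prod.mk x ⁻¹' ((fun q : ℝ × ℝ => q.1 + q.2) ⁻¹' B)) = {y | x + y ∈ B} := rfl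
    have hmeasset : MeasurableSet {y : ℝ | x + y ∈ B} := (measurable_const.add measurable_id) hB
    rw [hset, gammaMeasure, withDensity_apply _ hmeasset, ← lintegral_indicator hmeasset]
    have : ∀ y : ℝ, ({y : ℝ | x + y ∈ B}).indicator (gammaPDF a' r) y
        = (fun u => g u * gammaPDF a' r (u - x)) (x + y) := by
      intro y
      by_cases hy : x + y ∈ B
      · simp [Set.indicator_apply, hy, hg, add_sub_cancel_left]
      · simp [Set.indicator_apply, hy, hg]
    simp_rw [this]
    exact lintegral_add_left_eq_self (fun u => g u * gammaPDF a' r (u - x)) x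
  simp_rw [step1]
  have hinner : Measurable fun x : ℝ => ∫⁻ u, g u * gammaPDF a' r (u - x) :=
    Measurable.lintegral_prod_right' (f := fun q : ℝ × ℝ => g q.2 * gammaPDF a' r (q.2 - q.1))
      ((hgmeas.comp measurable_snd).mul (hf'.comp (measurable_snd.sub measurable_fst)))
  rw [gammaMeasure, lintegral_withDensity_eq_lintegral_mul _ hf hinner]
  simp only [Pi.mul_apply]
  have step2 : ∀ x : ℝ, gammaPDF a r x * ∫⁻ u, g u * gammaPDF a' r (u - x)
      = ∫⁻ u, g u * (gammaPDF a r x * gammaPDF a' r (u - x)) := by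
    intro x
    rw [← lintegral_const_mul' (gammaPDF a r x) _ (by simp [gammaPDF])]
    exact lintegral_congr fun u => by ring
  simp_rw [step2]
  rw [lintegral_lintegral_swap (by fun_prop)]
  have step3 : ∀ᵐ u ∂(volume : Measure ℝ),
      ∫⁻ x, g u * (gammaPDF a r x * gammaPDF a' r (u - x)) = B.indicator (gammaPDF (a+a') r) u := by
    filter_upwards [compl_mem_ae_iff.2 (volume_singleton (a := (0:ℝ)))] with u hu
    rw [lintegral_const_mul' _ _ (hgne u), conv_density ha ha' hr (by simpa using hu)]
    by_cases huB : u ∈ B <;> simp [hg, Set.indicator_apply, huB]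
  rw [lintegral_congr_ae step3, lintegral_indicator hB, gammaMeasure, withDensity_apply _ hB]

lemma map_add_gamma {Ω : Type*} [MeasurableSpace Ω] {P : Measure Ω} [IsProbabilityMeasure P]
    {X Y : Ω → ℝ} (hX : Measurable X) (hY : Measurable Y) (h : IndepFun X Y P)
    {a a' r : ℝ} (ha : 0 < a) (ha' : 0 < a') (hr : 0 < r)
    (hlX : P.map X = gammaMeasure a r) (hlY : P.map Y = gammaMeasure a' r) :
    P.map (fun ω => X ω + Y ω) = gammaMeasure (a + a') r := by
  have hpair : P.map (fun ω => (X ω, Y ω)) = (P.map X).prod (P.map Y) :=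
    (indepFun_iff_map_prod_eq_prod_map_map hX.aemeasurable hY.aemeasurable).mp h
  have : P.map (fun ω => X ω + Y ω)
      = (P.map (fun ω => (X ω, Y ω))).map (fun q : ℝ × ℝ => q.1 + q.2) := by
    rw [Measure.map_map measurable_add (hX.prodMk hY)]; rfl
  rw [this, hpair, hlX, hlY]
  exact gammaMeasure_conv ha ha' hr

lemma map_sum_gamma {Ω ι : Type*} [MeasurableSpace Ω] {P : Measure Ω} [IsProbabilityMeasure P]
    {X : ι → Ω → ℝ} (hX : ∀ i, Measurable (X i))
    (hind : iIndepFun X P)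
    {c : ι → ℝ} {r : ℝ} (hr : 0 < r) (hc : ∀ i, 0 < c i)
    (hlaw : ∀ i, P.map (X i) = gammaMeasure (c i) r) {s : Finset ι} (hs : s.Nonempty) :
    P.map (fun ω => ∑ i ∈ s, X i ω) = gammaMeasure (∑ i ∈ s, c i) r := by
  induction hs using Finset.Nonempty.cons_induction with
  | singleton i => simpa using hlaw i
  | cons i s hi hs ih =>
    have hsum : Measurable (fun ω => ∑ j ∈ s, X j ω) := by fun_prop
    have hindep : IndepFun (X i) (fun ω => ∑ j ∈ s, X j ω) P := by
      have h1 := (hind.indepFun_finsetSum_of_notMem hX hi).symm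
      have hfun : (fun ω => ∑ j ∈ s, X j ω) = ∑ j ∈ s, X j := by
        funext ω; simp [Finset.sum_apply]
      rw [hfun]; exact h1
    have : (fun ω => ∑ j ∈ Finset.cons i s hi, X j ω)
        = fun ω => X i ω + ∑ j ∈ s, X j ω := by
      funext ω; rw [Finset.sum_cons]
    rw [this, Finset.sum_cons]
    exact map_add_gamma (hX i) hsum hindep (hc i) (Finset.sum_pos (fun j _ => hc j) hs) hr
      (hlaw i) ih

lemma prod_castLE {M : Type*} [CommMonoid M] {p N : ℕ} (hpN : p ≤ N)
    (φ : Fin N → M) (h1 : ∀ i : Fin N, p ≤ (i : ℕ) → φ i = 1) :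
    ∏ i : Fin N, φ i = ∏ j : Fin p, φ (Fin.castLE hpN j) := by
  rw [← Finset.prod_image (g := Fin.castLE hpN)
    (fun x _ y _ h => Fin.castLE_injective hpN h)]
  refine (Finset.prod_subset (Finset.subset_univ _) ?_).symm
  intro i _ hi
  refine h1 i (le_of_not_gt fun hlt => hi ?_)
  exact Finset.mem_image.mpr ⟨⟨(i : ℕ), hlt⟩, Finset.mem_univ _, by ext; simp⟩

lemma sum_castLE {p N : ℕ} (hpN : p ≤ N)
    (φ : Fin N → ℕ) (h1 : ∀ i : Fin N, p ≤ (i : ℕ) → φ i = 0) :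
    ∑ i : Fin N, φ i = ∑ j : Fin p, φ (Fin.castLE hpN j) :=
  prod_castLE (M := Multiplicative ℕ) hpN φ h1

lemma lintegral_prod_iIndep {Ω ι : Type*} [MeasurableSpace Ω] {P : Measure Ω}
    [IsProbabilityMeasure P] {Y : ι → Ω → ℝ≥0∞}
    (h : iIndepFun Y P) (hm : ∀ i, Measurable (Y i)) (s : Finset ι) :
    ∫⁻ ω, ∏ i ∈ s, Y i ω ∂P = ∏ i ∈ s, ∫⁻ ω, Y i ω ∂P := by
  classical
  induction s using Finset.cons_induction with
  | empty => simp
  | cons i s hi ih =>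
    have hindep : IndepFun (Y i) (fun ω => ∏ j ∈ s, Y j ω) P := by
      have h1 := (h.indepFun_finsetProd_of_notMem hm hi).symm
      have hfun : (fun ω => ∏ j ∈ s, Y j ω) = ∏ j ∈ s, Y j := by
        funext ω; simp [Finset.prod_apply]
      rw [hfun]; exact h1
    have hsum : Measurable (fun ω => ∏ j ∈ s, Y j ω) :=
      Finset.measurable_prod _ fun j _ => hm j
    simp_rw [Finset.prod_cons]
    have hmul := lintegral_mul_eq_lintegral_mul_lintegral_of_indepFun (hm i) hsum hindep
    simp only [Pi.mul_apply] at hmul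
    rw [hmul, ih]

end GammaCondExpAux

open GammaCondExpAux

/-- Conditional expectation of a monomial in iid Gamma random variables given their sum:
`E[X₁^{k₁} ⋯ X_p^{k_p} | S] = ((a)_{k₁} ⋯ (a)_{k_p} / (N·a)_k) · S^k` a.s. -/
theorem stmt_0 {Ω : Type*} [MeasurableSpace Ω] (P : Measure Ω) [IsProbabilityMeasure P]
    (a b : ℝ) (ha : 0 < a) (hb : 0 < b) (N : ℕ) (hN : 1 ≤ N)
    (X : Fin N → Ω → ℝ) (hXmeas : ∀ i, Measurable (X i))
    (hXindep : iIndepFun X P)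
    (hXlaw : ∀ i, Measure.map (X i) P = gammaMeasure a b)
    (S : Ω → ℝ) (hS : S = fun ω => ∑ i, X i ω)
    (p : ℕ) (hp : 0 < p) (hpN : p ≤ N) (k : Fin p → ℕ) :
    P[fun ω => ∏ j : Fin p, (X (Fin.castLE hpN j) ω) ^ (k j)
        | MeasurableSpace.comap S (borel ℝ)]
      =ᵐ[P] fun ω =>
        ((∏ j : Fin p, (ascPochhammer ℝ (k j)).eval a)
            / (ascPochhammer ℝ (∑ j, k j)).eval ((N : ℝ) * a))
          * (S ω) ^ (∑ j, k j) := by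
  classical
  haveI : Nonempty (Fin N) := ⟨⟨0, hN⟩⟩
  -- notation
  set k0 : ℕ := ∑ j, k j with hk0_def
  set K : Fin N → ℕ := fun i => if h : (i : ℕ) < p then k ⟨(i : ℕ), h⟩ else 0 with hK_def
  have hKcast : ∀ j : Fin p, K (Fin.castLE hpN j) = k j := fun j => by
    simp only [hK_def, Fin.coe_castLE, j.isLt, dif_pos, Fin.eta]
  have hKzero : ∀ i : Fin N, p ≤ (i : ℕ) → K i = 0 := fun i hi => by
    simp only [hK_def, dif_neg (not_lt.2 hi)]
  have hK0 : ∑ i, K i = k0 := by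
    rw [sum_castLE hpN K hKzero]
    exact Finset.sum_congr rfl fun j _ => hKcast j
  have hSmeas : Measurable S := by rw [hS]; exact Finset.measurable_sum _ fun i _ => hXmeas i
  -- positivity a.s.
  have hpos : ∀ᵐ ω ∂P, ∀ i, 0 < X i ω := by
    rw [ae_all_iff]
    intro i
    have h1 : ∀ᵐ x ∂(P.map (X i)), 0 < x := by rw [hXlaw i]; exact gamma_ae_pos
    exact (ae_map_iff (hXmeas i).aemeasurable measurableSet_Ioi).mp h1
  -- the weight function
  set W : Ω → ℝ≥0∞ := fun ω => ∏ i, ENNReal.ofReal ((X i ω) ^ K i) with hW_def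
  have hWmeas : Measurable W :=
    Finset.measurable_prod _ fun i _ => ((hXmeas i).pow_const _).ennreal_ofReal
  set f : Ω → ℝ := fun ω => ∏ j : Fin p, (X (Fin.castLE hpN j) ω) ^ (k j) with hf_def
  have hfmeas : Measurable f :=
    Finset.measurable_prod _ fun j _ => (hXmeas _).pow_const _
  have hfW : ∀ ω, f ω = ∏ i, (X i ω) ^ K i := fun ω => by
    rw [prod_castLE hpN (fun i => X i ω ^ K i)
      (fun i hi => by simp only [hKzero i hi, pow_zero])]
    exact (Finset.prod_congr rfl fun j _ => by simp only [hKcast j]).symm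
  have hofW : ∀ᵐ ω ∂P, ENNReal.ofReal (f ω) = W ω := by
    filter_upwards [hpos] with ω hω
    rw [hfW ω, hW_def]
    exact ENNReal.ofReal_prod_of_nonneg fun i _ => pow_nonneg (hω i).le _
  -- the per-factor constants
  set CE : ℝ≥0∞ := ∏ i : Fin N, ENNReal.ofReal ((ascPochhammer ℝ (K i)).eval a / b ^ K i)
    with hCE_def
  set Creal : ℝ := (∏ j : Fin p, (ascPochhammer ℝ (k j)).eval a) / b ^ k0 with hCreal_def
  have hpochKpos : ∀ i : Fin N, 0 < (ascPochhammer ℝ (K i)).eval a :=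
    fun i => ascPochhammer_pos _ _ ha
  have hCrealpos : 0 < Creal := by
    rw [hCreal_def]
    have : 0 < ∏ j : Fin p, (ascPochhammer ℝ (k j)).eval a :=
      Finset.prod_pos fun j _ => ascPochhammer_pos _ _ ha
    positivity
  have hCE_eq : CE = ENNReal.ofReal Creal := by
    rw [hCE_def, ← ENNReal.ofReal_prod_of_nonneg
      (fun i _ => div_nonneg (hpochKpos i).le (by positivity))]
    congr 1
    rw [Finset.prod_div_distrib, Finset.prod_pow_eq_pow_sum, hK0, hCreal_def]
    congr 1
    rw [prod_castLE hpN (fun i => (ascPochhammer ℝ (K i)).eval a)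
      (fun i hi => by simp [hKzero i hi])]
    exact Finset.prod_congr rfl fun j _ => by simp only [hKcast j]
  have hCE0 : CE ≠ 0 := by rw [hCE_eq]; simpa using hCrealpos
  have hCEtop : CE ≠ ∞ := by rw [hCE_eq]; exact ENNReal.ofReal_ne_top
  -- the factorization identity
  have hfactor : ∀ (g : Fin N → ℝ → ℝ≥0∞), (∀ i, Measurable (g i)) →
      (∫⁻ ω, ∏ i, (ENNReal.ofReal ((X i ω) ^ K i) * g i (X i ω)) ∂P)
        = ∏ i, ((ENNReal.ofReal ((ascPochhammer ℝ (K i)).eval a / b ^ K i))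
            * ∫⁻ x, g i x ∂(gammaMeasure (a + K i) b)) := by
    intro g hg
    have hcomp : iIndepFun
        (fun i ω => ENNReal.ofReal ((X i ω) ^ K i) * g i (X i ω)) P :=
      hXindep.comp (fun i x => ENNReal.ofReal (x ^ K i) * g i x)
        (fun i => ((measurable_id.pow_const _).ennreal_ofReal.mul (hg i)))
    rw [lintegral_prod_iIndep hcomp
      (fun i => ((hXmeas i).pow_const _).ennreal_ofReal.mul ((hg i).comp (hXmeas i)))
      Finset.univ]
    refine Finset.prod_congr rfl fun i _ => ?_
    have h1 : ∫⁻ ω, ENNReal.ofReal ((X i ω) ^ K i) * g i (X i ω) ∂P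
        = ∫⁻ x, ENNReal.ofReal (x ^ K i) * g i x ∂(P.map (X i)) :=
      (lintegral_map ((measurable_id.pow_const _).ennreal_ofReal.mul (hg i)) (hXmeas i)).symm
    rw [h1, hXlaw i, lintegral_pow_mul ha hb (K i) (hg i)]
  -- the tilted measure
  set Q : Measure Ω := P.withDensity W with hQ_def
  have hQinter : ∀ (s : Finset (Fin N)) (Bs : Fin N → Set ℝ), (∀ i ∈ s, MeasurableSet (Bs i)) →
      Q (⋂ i ∈ s, X i ⁻¹' Bs i)
        = CE * ∏ i ∈ s, gammaMeasure (a + K i) b (Bs i) := by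
    intro s Bs hBs
    have hA : MeasurableSet (⋂ i ∈ s, X i ⁻¹' Bs i) :=
      MeasurableSet.biInter s.countable_toSet (fun i hi => (hXmeas i) (hBs i hi))
    rw [hQ_def, withDensity_apply _ hA, ← lintegral_indicator hA]
    have hptwise : ∀ ω, (⋂ i ∈ s, X i ⁻¹' Bs i).indicator W ω
        = ∏ i, (ENNReal.ofReal ((X i ω) ^ K i)
            * (if i ∈ s then (Bs i).indicator 1 (X i ω) else 1)) := by
      intro ω
      rw [Finset.prod_mul_distrib]
      have hWω : (∏ i, ENNReal.ofReal ((X i ω) ^ K i)) = W ω := rfl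
      rw [hWω]
      have h2 : (∏ i, if i ∈ s then (Bs i).indicator (1 : ℝ → ℝ≥0∞) (X i ω) else 1)
          = ∏ i ∈ s, (Bs i).indicator (1 : ℝ → ℝ≥0∞) (X i ω) := by
        rw [Finset.prod_ite_mem, Finset.univ_inter]
      rw [h2]
      by_cases hω : ω ∈ ⋂ i ∈ s, X i ⁻¹' Bs i
      · rw [Set.indicator_of_mem hω]
        have : ∀ i ∈ s, (Bs i).indicator (1 : ℝ → ℝ≥0∞) (X i ω) = 1 := fun i hi => by
          rw [Set.indicator_of_mem (by exact mem_iInter₂.mp hω i hi)]; rfl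
        rw [Finset.prod_congr rfl this]
        simp
      · rw [Set.indicator_of_notMem hω]
        obtain ⟨i, hi, hXi⟩ : ∃ i ∈ s, X i ω ∉ Bs i := by
          by_contra hcon
          push_neg at hcon
          exact hω (mem_iInter₂.mpr fun i hi => hcon i hi)
        rw [Finset.prod_eq_zero hi (by rw [Set.indicator_of_notMem hXi]), mul_zero]
    calc ∫⁻ ω, (⋂ i ∈ s, X i ⁻¹' Bs i).indicator W ω ∂P
        = ∫⁻ ω, ∏ i, (ENNReal.ofReal ((X i ω) ^ K i)
            * (if i ∈ s then (Bs i).indicator 1 (X i ω) else 1)) ∂P :=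
          lintegral_congr hptwise
      _ = ∏ i, ((ENNReal.ofReal ((ascPochhammer ℝ (K i)).eval a / b ^ K i))
            * ∫⁻ x, (if i ∈ s then (Bs i).indicator 1 x else 1)
                ∂(gammaMeasure (a + K i) b)) := by
          refine hfactor (fun i x => if i ∈ s then (Bs i).indicator 1 x else 1) fun i => ?_
          by_cases his : i ∈ s
          · simpa [his] using (measurable_one.indicator (hBs i his))
          · simpa [his] using measurable_const
      _ = CE * ∏ i ∈ s, gammaMeasure (a + K i) b (Bs i) := by
          have h3 : ∀ i : Fin N, (∫⁻ x, (if i ∈ s then (Bs i).indicator 1 x else 1)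
              ∂(gammaMeasure (a + K i) b))
              = if i ∈ s then gammaMeasure (a + K i) b (Bs i) else 1 := fun i => by
            haveI := isProbabilityMeasure_gammaMeasure
              (show (0:ℝ) < a + K i by positivity) hb
            by_cases his : i ∈ s
            · simp only [his, if_true]
              exact lintegral_indicator_one (hBs i his)
            · simp [his]
          simp_rw [h3]
          rw [Finset.prod_mul_distrib, ← hCE_def, Finset.prod_ite_mem, Finset.univ_inter]
  have hQuniv : Q Set.univ = CE := by
    have := hQinter ∅ (fun _ => Set.univ) (fun i hi => MeasurableSet.univ)
    simpa using this
  -- the normalized tilted measure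
  set P2 : Measure Ω := CE⁻¹ • Q with hP2_def
  haveI hP2prob : IsProbabilityMeasure P2 :=
    ⟨by rw [hP2_def, Measure.smul_apply, hQuniv, smul_eq_mul,
        ENNReal.inv_mul_cancel hCE0 hCEtop]⟩
  have hP2inter : ∀ (s : Finset (Fin N)) (Bs : Fin N → Set ℝ),
      (∀ i ∈ s, MeasurableSet (Bs i)) →
      P2 (⋂ i ∈ s, X i ⁻¹' Bs i) = ∏ i ∈ s, gammaMeasure (a + K i) b (Bs i) := by
    intro s Bs hBs
    rw [hP2_def, Measure.smul_apply, hQinter s Bs hBs, smul_eq_mul, ← mul_assoc,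
      ENNReal.inv_mul_cancel hCE0 hCEtop, one_mul]
  have hP2single : ∀ (i : Fin N) (B : Set ℝ), MeasurableSet B →
      P2 (X i ⁻¹' B) = gammaMeasure (a + K i) b B := by
    intro i B hB
    have := hP2inter {i} (fun _ => B) (fun _ _ => hB)
    simpa using this
  have hmapP2 : ∀ i, P2.map (X i) = gammaMeasure (a + K i) b := by
    intro i
    ext B hB
    rw [Measure.map_apply (hXmeas i) hB, hP2single i B hB]
  have hindP2 : iIndepFun X P2 := by
    rw [iIndepFun_iff_measure_inter_preimage_eq_mul]
    intro s sets hsets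
    rw [hP2inter s sets hsets]
    exact Finset.prod_congr rfl fun i hi => (hP2single i (sets i) (hsets i hi)).symm
  -- the law of S under P2
  have hshape : ∑ i : Fin N, (a + (K i : ℝ)) = (N : ℝ) * a + k0 := by
    rw [Finset.sum_add_distrib, Finset.sum_const, Finset.card_univ, Fintype.card_fin,
      nsmul_eq_mul]
    congr 1
    rw [← hK0]
    push_cast
    rfl
  have hmapSP2 : P2.map S = gammaMeasure ((N : ℝ) * a + k0) b := by
    have hres := map_sum_gamma (P := P2) hXmeas hindP2 hb
      (fun i => (show (0:ℝ) < a + K i by positivity)) hmapP2 Finset.univ_nonempty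
    rw [← hshape, ← hres, hS]
  -- the key lintegral formula
  have hkey : ∀ B : Set ℝ, MeasurableSet B →
      ∫⁻ ω in S ⁻¹' B, W ω ∂P = CE * gammaMeasure ((N : ℝ) * a + k0) b B := by
    intro B hB
    have h1 : ∫⁻ ω in S ⁻¹' B, W ω ∂P = Q (S ⁻¹' B) :=
      (withDensity_apply _ (hSmeas hB)).symm
    have h2 : Q = CE • P2 := by
      rw [hP2_def, smul_smul, ENNReal.mul_inv_cancel hCE0 hCEtop, one_smul]
    rw [h1, h2, Measure.smul_apply, smul_eq_mul, ← Measure.map_apply hSmeas hB, hmapSP2]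
  -- the law of S under P
  have hmapSP : P.map S = gammaMeasure ((N : ℝ) * a) b := by
    have hres := map_sum_gamma (P := P) hXmeas hXindep hb (fun _ : Fin N => ha)
      hXlaw Finset.univ_nonempty
    have : ∑ _i : Fin N, a = (N : ℝ) * a := by
      rw [Finset.sum_const, Finset.card_univ, Fintype.card_fin, nsmul_eq_mul]
    rw [← this, ← hres, hS]
  -- a.s. positivity of S
  have hSpos : ∀ᵐ ω ∂P, 0 < S ω := by
    filter_upwards [hpos] with ω hω
    simp only [hS]
    exact Finset.sum_pos (fun i _ => hω i) Finset.univ_nonempty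
  have hNa : (0:ℝ) < (N : ℝ) * a := mul_pos (by exact_mod_cast hN) ha
  -- total mass of W
  have hQuniv' : ∫⁻ ω, W ω ∂P = CE := by
    rw [← hQuniv, hQ_def, withDensity_apply _ MeasurableSet.univ, Measure.restrict_univ]
  -- integrability of f
  have hf_int : Integrable f P := by
    refine ⟨hfmeas.aestronglyMeasurable, ?_⟩
    rw [hasFiniteIntegral_iff_norm]
    have hnn : ∫⁻ ω, ENNReal.ofReal ‖f ω‖ ∂P = CE := by
      rw [← hQuniv']
      refine lintegral_congr_ae ?_
      filter_upwards [hpos, hofW] with ω h1 h2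
      rw [Real.norm_of_nonneg (by
        rw [hfW ω]; exact Finset.prod_nonneg fun i _ => pow_nonneg (h1 i).le _), h2]
    rw [hnn]
    exact hCEtop.lt_top
  -- integrability of S ^ k0
  have hSk_int : Integrable (fun ω => S ω ^ k0) P := by
    refine ⟨(hSmeas.pow_const _).aestronglyMeasurable, ?_⟩
    rw [hasFiniteIntegral_iff_norm]
    have h1 : ∫⁻ ω, ENNReal.ofReal ‖S ω ^ k0‖ ∂P = ∫⁻ ω, ENNReal.ofReal ((S ω) ^ k0) ∂P := by
      refine lintegral_congr_ae ?_
      filter_upwards [hSpos] with ω hω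
      rw [Real.norm_of_nonneg (pow_nonneg hω.le _)]
    have h2 : ∫⁻ ω, ENNReal.ofReal ((S ω) ^ k0) ∂P
        = ∫⁻ x, ENNReal.ofReal (x ^ k0) ∂(P.map S) :=
      (lintegral_map (f := fun x : ℝ => ENNReal.ofReal (x ^ k0))
        ((measurable_id.pow_const _).ennreal_ofReal) hSmeas).symm
    rw [h1, h2, hmapSP, gamma_moment hNa hb k0]
    exact ENNReal.ofReal_lt_top
  -- rewrite the borel σ-algebra
  have hborel : (borel ℝ) = (inferInstance : MeasurableSpace ℝ) :=
    (BorelSpace.measurable_eq (α := ℝ)).symm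
  rw [hborel]
  have hm : MeasurableSpace.comap S inferInstance ≤ (inferInstance : MeasurableSpace Ω) :=
    hSmeas.comap_le
  set c : ℝ := (∏ j : Fin p, (ascPochhammer ℝ (k j)).eval a)
      / (ascPochhammer ℝ k0).eval ((N : ℝ) * a) with hc_def
  have hpochNa : 0 < (ascPochhammer ℝ k0).eval ((N : ℝ) * a) := ascPochhammer_pos _ _ hNa
  haveI := isProbabilityMeasure_gammaMeasure (show (0:ℝ) < (N:ℝ) * a + k0 by positivity) hb
  refine (ae_eq_condExp_of_forall_setIntegral_eq (μ := P) hm hf_int ?_ ?_ ?_).symm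
  · intro s _ _
    exact ((hSk_int.const_mul c).integrableOn)
  · intro s hs _
    obtain ⟨B, hB, rfl⟩ := MeasurableSpace.measurableSet_comap.mp hs
    have hγtop : gammaMeasure ((N : ℝ) * a + k0) b B ≠ ∞ := measure_ne_top _ _
    set T : ℝ := (gammaMeasure ((N : ℝ) * a + k0) b B).toReal with hT_def
    have hfint : ∫ ω in S ⁻¹' B, f ω ∂P = Creal * T := by
      rw [integral_eq_lintegral_of_nonneg_ae
        (ae_restrict_of_ae (by
          filter_upwards [hpos] with ω hω
          rw [hfW ω]
          exact Finset.prod_nonneg fun i _ => pow_nonneg (hω i).le _))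
        hfmeas.aestronglyMeasurable.restrict]
      have h4 : ∫⁻ ω in S ⁻¹' B, ENNReal.ofReal (f ω) ∂P = ∫⁻ ω in S ⁻¹' B, W ω ∂P :=
        lintegral_congr_ae (ae_restrict_of_ae hofW)
      rw [h4, hkey B hB, ENNReal.toReal_mul, hCE_eq, ENNReal.toReal_ofReal hCrealpos.le]
    have hgint : ∫ ω in S ⁻¹' B, c * S ω ^ k0 ∂P = Creal * T := by
      rw [MeasureTheory.integral_const_mul]
      have h5 : ∫ ω in S ⁻¹' B, S ω ^ k0 ∂P = ∫ x in B, x ^ k0 ∂(P.map S) :=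
        (setIntegral_map (f := fun x : ℝ => x ^ k0) hB
          ((measurable_id.pow_const _).aestronglyMeasurable) hSmeas.aemeasurable).symm
      have h6 : ∫ x in B, x ^ k0 ∂(gammaMeasure ((N:ℝ)*a) b)
          = ((ascPochhammer ℝ k0).eval ((N:ℝ)*a) / b ^ k0) * T := by
        rw [integral_eq_lintegral_of_nonneg_ae
          (ae_restrict_of_ae (by filter_upwards [gamma_ae_pos] with x hx
                                 exact pow_nonneg hx.le _))
          ((by fun_prop : Measurable fun x : ℝ => x ^ k0).aestronglyMeasurable.restrict)]
        rw [gamma_set_moment hNa hb k0 hB, ENNReal.toReal_mul,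
          ENNReal.toReal_ofReal (by positivity)]
      rw [h5, hmapSP, h6, hc_def, hCreal_def, hT_def]
      have hbk : (0:ℝ) < b ^ k0 := by positivity
      field_simp
    rw [hfint, hgint]
  · refine StronglyMeasurable.aestronglyMeasurable ?_
    have hSm : Measurable[MeasurableSpace.comap S inferInstance] S :=
      Measurable.of_comap_le le_rfl
    exact Measurable.stronglyMeasurable ((hSm.pow_const k0).const_mul c)
end

section
/- Let s, t, b > 0 be real numbers and k ∈ ℕ. Then for every z ∈ ℝ, ∫_ℝ y^k · γ_{s,b}(y) · γ_{t,b}(z − y) dy = ((s)_k / (s + t)_k) · z^k · γ_{s+t,b}(z). -/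
open MeasureTheory

/-- The Gamma probability density with shape `s > 0` and rate `b > 0`:
`γ_{s,b}(x) = b^s x^{s−1} e^{−bx}/Γ(s)` for `x > 0` and `0` for `x ≤ 0`. -/
noncomputable def gammaDensity (s b : ℝ) (x : ℝ) : ℝ :=
  if 0 < x then b ^ s * x ^ (s - 1) * Real.exp (-(b * x)) / Real.Gamma s else 0

/-- Real Beta integral in terms of Gamma functions. -/
lemma real_beta {p q : ℝ} (hp : 0 < p) (hq : 0 < q) :
    ∫ x in (0:ℝ)..1, x ^ (p - 1) * (1 - x) ^ (q - 1)
      = Real.Gamma p * Real.Gamma q / Real.Gamma (p + q) := by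
  have hGpq : Real.Gamma (p + q) ≠ 0 := (Real.Gamma_pos_of_pos (by linarith)).ne'
  have hc : Complex.betaIntegral p q
      = ((Real.Gamma p * Real.Gamma q / Real.Gamma (p + q) : ℝ) : ℂ) := by
    have h := Complex.Gamma_mul_Gamma_eq_betaIntegral (s := (p : ℂ)) (t := (q : ℂ))
      (by simpa using hp) (by simpa using hq)
    rw [show ((p : ℂ) + q) = ((p + q : ℝ) : ℂ) by push_cast; ring, Complex.Gamma_ofReal,
      Complex.Gamma_ofReal, Complex.Gamma_ofReal] at h
    have hG : (Real.Gamma (p + q) : ℂ) ≠ 0 := by exact_mod_cast hGpq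
    push_cast
    rw [eq_div_iff hG]
    linear_combination -h
  have hint : Complex.betaIntegral p q
      = ((∫ x in (0:ℝ)..1, x ^ (p - 1) * (1 - x) ^ (q - 1) : ℝ) : ℂ) := by
    rw [Complex.betaIntegral, ← intervalIntegral.integral_ofReal]
    refine intervalIntegral.integral_congr fun x hx => ?_
    rw [Set.uIcc_of_le (by norm_num)] at hx
    push_cast
    rw [Complex.ofReal_cpow hx.1, Complex.ofReal_cpow (by linarith [hx.2])]
    push_cast
    ring
  have := hint.symm.trans hc
  exact_mod_cast this

/-- Scaled real Beta integral. -/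
lemma real_beta_scaled {p q z : ℝ} (hp : 0 < p) (hq : 0 < q) (hz : 0 < z) :
    ∫ y in (0:ℝ)..z, y ^ (p - 1) * (z - y) ^ (q - 1)
      = z ^ (p + q - 1) * (Real.Gamma p * Real.Gamma q / Real.Gamma (p + q)) := by
  have hsub := intervalIntegral.integral_comp_mul_left (a := (0:ℝ)) (b := (1:ℝ)) (c := z)
    (f := fun y => y ^ (p - 1) * (z - y) ^ (q - 1)) hz.ne'
  simp only [mul_zero, mul_one, smul_eq_mul] at hsub
  have key : ∫ x in (0:ℝ)..1, (z * x) ^ (p - 1) * (z - z * x) ^ (q - 1)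
      = z ^ (p - 1) * z ^ (q - 1) * ∫ x in (0:ℝ)..1, x ^ (p - 1) * (1 - x) ^ (q - 1) := by
    rw [← intervalIntegral.integral_const_mul]
    refine intervalIntegral.integral_congr fun x hx => ?_
    rw [Set.uIcc_of_le (by norm_num)] at hx
    rw [show z - z * x = z * (1 - x) by ring,
      Real.mul_rpow hz.le hx.1, Real.mul_rpow hz.le (by linarith [hx.2])]
    ring
  have hmain : ∫ y in (0:ℝ)..z, y ^ (p - 1) * (z - y) ^ (q - 1)
      = z * (z ^ (p - 1) * z ^ (q - 1) * ∫ x in (0:ℝ)..1, x ^ (p - 1) * (1 - x) ^ (q - 1)) := by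
    calc ∫ y in (0:ℝ)..z, y ^ (p - 1) * (z - y) ^ (q - 1)
        = z * (z⁻¹ * ∫ y in (0:ℝ)..z, y ^ (p - 1) * (z - y) ^ (q - 1)) := by
          field_simp
      _ = z * ∫ x in (0:ℝ)..1, (z * x) ^ (p - 1) * (z - z * x) ^ (q - 1) := by rw [← hsub]
      _ = _ := by rw [key]
  rw [hmain, real_beta hp hq,
    show z ^ (p + q - 1) = z * (z ^ (p - 1) * z ^ (q - 1)) by
      rw [show p + q - 1 = 1 + ((p - 1) + (q - 1)) by ring, Real.rpow_add hz,
        Real.rpow_add hz, Real.rpow_one]]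
  ring

/-- Convolution of Gamma densities with common rate. -/
lemma gammaDensity_conv (p q b : ℝ) (hp : 0 < p) (hq : 0 < q) (hb : 0 < b) (z : ℝ) :
    ∫ y : ℝ, gammaDensity p b y * gammaDensity q b (z - y) = gammaDensity (p + q) b z := by
  have hGp : Real.Gamma p ≠ 0 := (Real.Gamma_pos_of_pos hp).ne'
  have hGq : Real.Gamma q ≠ 0 := (Real.Gamma_pos_of_pos hq).ne'
  have hGpq : Real.Gamma (p + q) ≠ 0 := (Real.Gamma_pos_of_pos (by linarith)).ne'
  rcases le_or_gt z 0 with hz | hz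
  · have h0 : ∀ y : ℝ, gammaDensity p b y * gammaDensity q b (z - y) = 0 := by
      intro y
      unfold gammaDensity
      by_cases hy : 0 < y
      · rw [if_neg (by linarith : ¬ 0 < z - y)]; ring
      · rw [if_neg hy]; ring
    simp only [h0, integral_zero]
    rw [gammaDensity, if_neg (not_lt.mpr hz)]
  · have hvanish : ∀ y : ℝ, y ∉ Set.Ioo 0 z →
        gammaDensity p b y * gammaDensity q b (z - y) = 0 := by
      intro y hy
      rw [Set.mem_Ioo, not_and_or] at hy
      unfold gammaDensity
      rcases hy with h | h
      · rw [if_neg h]; ring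
      · rw [if_neg (by rw [not_lt] at h ⊢; linarith : ¬ 0 < z - y)]; ring
    rw [← setIntegral_eq_integral_of_forall_compl_eq_zero hvanish]
    have hcongr : ∫ y in Set.Ioo 0 z, gammaDensity p b y * gammaDensity q b (z - y)
        = ∫ y in Set.Ioo 0 z,
            (b ^ p * b ^ q * Real.exp (-(b * z)) / (Real.Gamma p * Real.Gamma q))
              * (y ^ (p - 1) * (z - y) ^ (q - 1)) := by
      refine setIntegral_congr_fun measurableSet_Ioo fun y hy => ?_
      obtain ⟨h1, h2⟩ := hy
      unfold gammaDensity
      rw [if_pos h1, if_pos (by linarith : (0:ℝ) < z - y)]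
      have hexp : Real.exp (-(b * y)) * Real.exp (-(b * (z - y))) = Real.exp (-(b * z)) := by
        rw [← Real.exp_add]; ring_nf
      calc b ^ p * y ^ (p - 1) * Real.exp (-(b * y)) / Real.Gamma p *
            (b ^ q * (z - y) ^ (q - 1) * Real.exp (-(b * (z - y))) / Real.Gamma q)
          = (Real.exp (-(b * y)) * Real.exp (-(b * (z - y)))) *
              (b ^ p * b ^ q * y ^ (p - 1) * (z - y) ^ (q - 1)) /
              (Real.Gamma p * Real.Gamma q) := by ring
        _ = _ := by rw [hexp]; ring
    rw [hcongr, integral_const_mul, ← integral_Ioc_eq_integral_Ioo,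
      ← intervalIntegral.integral_of_le hz.le, real_beta_scaled hp hq hz]
    rw [gammaDensity, if_pos hz, Real.rpow_add hb]
    field_simp

lemma gamma_mul_asc (s : ℝ) (hs : 0 < s) (k : ℕ) :
    Real.Gamma s * (ascPochhammer ℝ k).eval s = Real.Gamma (s + k) := by
  induction k with
  | zero => simp
  | succ n ih =>
    rw [ascPochhammer_succ_eval, ← mul_assoc, ih,
      show s + (n + 1 : ℕ) = (s + n) + 1 by push_cast; ring,
      Real.Gamma_add_one (by positivity)]
    ring

lemma pow_mul_gammaDensity (s b : ℝ) (hs : 0 < s) (hb : 0 < b) (k : ℕ) (y : ℝ) :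
    y ^ k * gammaDensity s b y
      = (Real.Gamma (s + k) / (Real.Gamma s * b ^ k)) * gammaDensity (s + k) b y := by
  unfold gammaDensity
  by_cases hy : 0 < y
  · rw [if_pos hy, if_pos hy]
    have hGs : Real.Gamma s ≠ 0 := (Real.Gamma_pos_of_pos hs).ne'
    have hGsk : Real.Gamma (s + k) ≠ 0 := (Real.Gamma_pos_of_pos (by positivity)).ne'
    rw [show s + (k : ℝ) - 1 = (s - 1) + (k : ℝ) by ring, Real.rpow_add hy,
      Real.rpow_natCast, Real.rpow_add hb, Real.rpow_natCast]
    field_simp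
  · rw [if_neg hy, if_neg hy]; ring

/-- Moment-weighted convolution identity for Gamma densities:
`∫ y^k γ_{s,b}(y) γ_{t,b}(z−y) dy = ((s)_k/(s+t)_k) z^k γ_{s+t,b}(z)`. -/
theorem stmt_3 (s t b : ℝ) (hs : 0 < s) (ht : 0 < t) (hb : 0 < b) (k : ℕ) (z : ℝ) :
    ∫ y : ℝ, y ^ k * gammaDensity s b y * gammaDensity t b (z - y)
      = ((ascPochhammer ℝ k).eval s / (ascPochhammer ℝ k).eval (s + t))
          * z ^ k * gammaDensity (s + t) b z := by
  have h1 : ∀ y : ℝ, y ^ k * gammaDensity s b y * gammaDensity t b (z - y)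
      = (Real.Gamma (s + k) / (Real.Gamma s * b ^ k))
          * (gammaDensity (s + k) b y * gammaDensity t b (z - y)) := by
    intro y
    rw [pow_mul_gammaDensity s b hs hb k y]
    ring
  calc ∫ y : ℝ, y ^ k * gammaDensity s b y * gammaDensity t b (z - y)
      = ∫ y : ℝ, (Real.Gamma (s + k) / (Real.Gamma s * b ^ k))
          * (gammaDensity (s + k) b y * gammaDensity t b (z - y)) := by
        exact congrArg _ (funext h1)
    _ = (Real.Gamma (s + k) / (Real.Gamma s * b ^ k))
          * ∫ y : ℝ, gammaDensity (s + k) b y * gammaDensity t b (z - y) := by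
        rw [integral_const_mul]
    _ = (Real.Gamma (s + k) / (Real.Gamma s * b ^ k)) * gammaDensity (s + k + t) b z := by
        rw [gammaDensity_conv (s + k) t b (by positivity) ht hb z]
    _ = ((ascPochhammer ℝ k).eval s / (ascPochhammer ℝ k).eval (s + t))
          * z ^ k * gammaDensity (s + t) b z := by
        rw [mul_assoc, pow_mul_gammaDensity (s + t) b (by linarith) hb k z,
          show s + k + t = s + t + k by ring]
        have hGs : Real.Gamma s ≠ 0 := (Real.Gamma_pos_of_pos hs).ne'
        have hGst : Real.Gamma (s + t) ≠ 0 := (Real.Gamma_pos_of_pos (by linarith)).ne'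
        have hbk : (b : ℝ) ^ k ≠ 0 := by positivity
        have has : (ascPochhammer ℝ k).eval s ≠ 0 := by
          intro h
          have h2 := gamma_mul_asc s hs k
          rw [h, mul_zero] at h2
          exact (Real.Gamma_pos_of_pos (by positivity : (0:ℝ) < s + k)).ne' h2.symm
        have hast : (ascPochhammer ℝ k).eval (s + t) ≠ 0 := by
          intro h
          have h2 := gamma_mul_asc (s + t) (by linarith) k
          rw [h, mul_zero] at h2
          exact (Real.Gamma_pos_of_pos (by positivity : (0:ℝ) < s + t + k)).ne' h2.symm
        rw [← gamma_mul_asc s hs k, ← gamma_mul_asc (s + t) (by linarith) k]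
        field_simp
end

section
/- Let s ⊆ ι be a nonempty finite set and i ∈ s. Then κ(s) = χ(s) − Σ_t κ(t) · χ(s \ t), where the sum runs over all finite sets t with i ∈ t ⊆ s and t ≠ s. -/
open Finset

/-- The cumulant `κ(t) = Σ_P (−1)^{|P|−1} (|P|−1)! ∏_{b ∈ P} χ(b)`, summing over all
partitions `P` of `t` into nonempty blocks. -/
noncomputable def cumulant {ι R : Type*} [DecidableEq ι] [CommRing R]
    (χ : Finset ι → R) (t : Finset ι) : R :=
  ∑ P : Finpartition t, (-1 : R) ^ (P.parts.card - 1) * ((P.parts.card - 1).factorial : R)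
    * ∏ b ∈ P.parts, χ b

namespace CumulantAux

variable {ι R : Type*} [DecidableEq ι] [CommRing R]

/-- The set of parts-sets of finpartitions of `t`. -/
noncomputable def partsSet (t : Finset ι) : Finset (Finset (Finset ι)) :=
  (Finset.univ : Finset (Finpartition t)).image Finpartition.parts

lemma mem_partsSet {t : Finset ι} {P : Finset (Finset ι)} :
    P ∈ partsSet t ↔ ∃ P' : Finpartition t, P'.parts = P := by
  simp [partsSet]

lemma cumulant_eq (χ : Finset ι → R) (t : Finset ι) :
    cumulant χ t = ∑ P ∈ partsSet t,
      (-1 : R) ^ (P.card - 1) * ((P.card - 1).factorial : R) * ∏ b ∈ P, χ b := by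
  rw [partsSet, Finset.sum_image (fun P _ Q _ h => Finpartition.ext h)]
  rfl

lemma insert_mem_partsSet {s t : Finset ι} (hts : t ⊆ s) (hne : t ≠ s)
    {Q : Finset (Finset ι)} (hQ : Q ∈ partsSet t) :
    insert (s \ t) Q ∈ partsSet s := by
  obtain ⟨Q', rfl⟩ := mem_partsSet.1 hQ
  have hb : s \ t ≠ (⊥ : Finset ι) := by
    simp only [bot_eq_empty, Ne, sdiff_eq_empty_iff_subset]
    exact fun h => hne (subset_antisymm hts h)
  exact mem_partsSet.2 ⟨Q'.extend hb disjoint_sdiff (sup_sdiff_cancel' le_rfl hts), rfl⟩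

lemma erase_mem_partsSet {s : Finset ι} {P : Finset (Finset ι)} {c : Finset ι}
    (hP : P ∈ partsSet s) (hc : c ∈ P) :
    P.erase c ∈ partsSet (s \ c) := by
  obtain ⟨P', rfl⟩ := mem_partsSet.1 hP
  have hd : Disjoint c ((P'.parts.erase c).sup id) :=
    P'.supIndep (erase_subset c _) hc (notMem_erase c _)
  refine mem_partsSet.2 ⟨⟨P'.parts.erase c, P'.supIndep.subset (erase_subset _ _), ?_, fun h =>
    P'.bot_notMem (mem_of_mem_erase h)⟩, rfl⟩
  have hsup : c ⊔ (P'.parts.erase c).sup id = s := by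
    conv_rhs => rw [← P'.sup_parts, ← Finset.insert_erase hc]
    simp [Finset.sup_insert]
  calc (P'.parts.erase c).sup id = (c ⊔ (P'.parts.erase c).sup id) \ c :=
        (hd.sup_sdiff_cancel_left).symm
    _ = s \ c := by rw [hsup]

/-- The coefficient identity. -/
lemma coeff_eq (k : ℕ) :
    (-1 : R) ^ (k - 1) * ((k - 1).factorial : R)
      + ((k - 1 : ℕ) : R) * ((-1 : R) ^ (k - 2) * ((k - 2).factorial : R))
      = if k = 1 then 1 else if k = 0 then 1 else 0 := by
  match k with
  | 0 => simp
  | 1 => simp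
  | (n + 2) =>
    have h1 : n + 2 - 1 = n + 1 := rfl
    have h2 : n + 2 - 2 = n := rfl
    rw [h1, h2, if_neg (by omega), if_neg (by omega), Nat.factorial_succ, pow_succ]
    push_cast
    ring

end CumulantAux

open CumulantAux in
/-- Recursion for cumulants: for `i ∈ s` nonempty,
`κ(s) = χ(s) − Σ_{i ∈ t ⊊ s} κ(t) χ(s \ t)`. -/
theorem stmt_4 {ι R : Type*} [DecidableEq ι] [CommRing R] (χ : Finset ι → R)
    (s : Finset ι) (hs : s.Nonempty) (i : ι) (hi : i ∈ s) :
    cumulant χ s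
      = χ s - ∑ t ∈ s.powerset.filter (fun t => i ∈ t ∧ t ≠ s),
          cumulant χ t * χ (s \ t) := by
  classical
  -- Step 1: rewrite the RHS sum as a sum over pairs (P, c) with P a partition of s,
  -- c a block of P not containing i.
  have key : ∑ t ∈ s.powerset.filter (fun t => i ∈ t ∧ t ≠ s), cumulant χ t * χ (s \ t)
      = ∑ P ∈ partsSet (ι := ι) s, ∑ c ∈ P.filter (fun c => i ∉ c),
          (-1 : R) ^ (P.card - 2) * ((P.card - 2).factorial : R)
            * ((∏ b ∈ P.erase c, χ b) * χ c) := by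
    simp_rw [cumulant_eq, Finset.sum_mul]
    rw [Finset.sum_sigma', Finset.sum_sigma']
    refine Finset.sum_bij'
      (fun x hx => ⟨insert (s \ x.1) x.2, s \ x.1⟩)
      (fun y hy => ⟨s \ y.2, y.1.erase y.2⟩) ?_ ?_ ?_ ?_ ?_
    · rintro ⟨t, Q⟩ hx
      simp only [Finset.mem_sigma, Finset.mem_filter, Finset.mem_powerset] at hx ⊢
      obtain ⟨⟨hts, hit, hne⟩, hQ⟩ := hx
      refine ⟨insert_mem_partsSet hts hne hQ, Finset.mem_insert_self _ _, ?_⟩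
      simp [hit]
    · rintro ⟨P, c⟩ hy
      simp only [Finset.mem_sigma, Finset.mem_filter, Finset.mem_powerset] at hy ⊢
      obtain ⟨hP, hcP, hic⟩ := hy
      obtain ⟨P', rfl⟩ := mem_partsSet.1 hP
      have hcs : c ⊆ s := P'.le hcP
      have hcne : c.Nonempty := P'.nonempty_of_mem_parts hcP
      refine ⟨⟨sdiff_subset, by simp [hi, hic], ?_⟩, erase_mem_partsSet hP hcP⟩
      intro h
      obtain ⟨x, hx⟩ := hcne
      have hxs : x ∈ s := hcs hx
      rw [← h] at hxs
      exact (Finset.mem_sdiff.1 hxs).2 hx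
    · rintro ⟨t, Q⟩ hx
      simp only [Finset.mem_sigma, Finset.mem_filter, Finset.mem_powerset] at hx
      obtain ⟨⟨hts, hit, hne⟩, hQ⟩ := hx
      obtain ⟨Q', rfl⟩ := mem_partsSet.1 hQ
      have hnot : s \ t ∉ Q'.parts := by
        intro h
        have h1 : s \ t ⊆ t := Q'.le h
        have h2 : (s \ t).Nonempty := Q'.nonempty_of_mem_parts h
        obtain ⟨x, hx⟩ := h2
        exact (Finset.mem_sdiff.1 hx).2 (h1 hx)
      refine Sigma.ext ?_ (heq_of_eq ?_)
      · exact Finset.sdiff_sdiff_eq_self hts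
      · exact Finset.erase_insert hnot
    · rintro ⟨P, c⟩ hy
      simp only [Finset.mem_sigma, Finset.mem_filter] at hy
      obtain ⟨hP, hcP, hic⟩ := hy
      obtain ⟨P', rfl⟩ := mem_partsSet.1 hP
      have hcs : c ⊆ s := P'.le hcP
      refine Sigma.ext ?_ (heq_of_eq ?_)
      · show insert (s \ (s \ c)) (P'.parts.erase c) = P'.parts
        rw [Finset.sdiff_sdiff_eq_self hcs]
        exact Finset.insert_erase hcP
      · show s \ (s \ c) = c
        exact Finset.sdiff_sdiff_eq_self hcs
    · rintro ⟨t, Q⟩ hx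
      simp only [Finset.mem_sigma, Finset.mem_filter, Finset.mem_powerset] at hx
      obtain ⟨⟨hts, hit, hne⟩, hQ⟩ := hx
      obtain ⟨Q', rfl⟩ := mem_partsSet.1 hQ
      have hnot : s \ t ∉ Q'.parts := by
        intro h
        have h1 : s \ t ⊆ t := Q'.le h
        have h2 : (s \ t).Nonempty := Q'.nonempty_of_mem_parts h
        obtain ⟨x, hx⟩ := h2
        exact (Finset.mem_sdiff.1 hx).2 (h1 hx)
      have hcard : (insert (s \ t) Q'.parts).card = Q'.parts.card + 1 :=
        Finset.card_insert_of_notMem hnot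
      simp only [hcard, Nat.add_sub_cancel, Finset.erase_insert hnot]
      have : Q'.parts.card + 1 - 2 = Q'.parts.card - 1 := by omega
      rw [this]
      ring
  rw [key, cumulant_eq]
  rw [eq_sub_iff_add_eq, ← Finset.sum_add_distrib]
  -- Step 2: simplify each inner sum and combine coefficients.
  have step : ∀ P ∈ partsSet (ι := ι) s,
      ((-1 : R) ^ (P.card - 1) * ((P.card - 1).factorial : R) * ∏ b ∈ P, χ b)
        + ∑ c ∈ P.filter (fun c => i ∉ c),
            (-1 : R) ^ (P.card - 2) * ((P.card - 2).factorial : R)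
              * ((∏ b ∈ P.erase c, χ b) * χ c)
      = (if P = {s} then χ s else 0) := by
    intro P hP
    obtain ⟨P', rfl⟩ := mem_partsSet.1 hP
    -- inner sum: each term equals const * full product
    have hterm : ∀ c ∈ P'.parts.filter (fun c => i ∉ c),
        (-1 : R) ^ (P'.parts.card - 2) * ((P'.parts.card - 2).factorial : R)
          * ((∏ b ∈ P'.parts.erase c, χ b) * χ c)
        = (-1 : R) ^ (P'.parts.card - 2) * ((P'.parts.card - 2).factorial : R)
          * ∏ b ∈ P'.parts, χ b := by
      intro c hc
      rw [Finset.prod_erase_mul _ _ (Finset.mem_filter.1 hc).1]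
    rw [Finset.sum_congr rfl hterm, Finset.sum_const]
    -- the filter has card = P.card - 1
    have hone : P'.parts.filter (fun c => i ∈ c) = {P'.part i} := by
      ext b
      simp only [Finset.mem_filter, Finset.mem_singleton]
      constructor
      · rintro ⟨hb, hib⟩
        exact P'.eq_of_mem_parts hb (P'.part_mem.2 hi) hib (P'.mem_part hi)
      · rintro rfl
        exact ⟨P'.part_mem.2 hi, P'.mem_part hi⟩
    have hcardfilter : (P'.parts.filter (fun c => i ∉ c)).card = P'.parts.card - 1 := by
      have := Finset.card_filter_add_card_filter_not (s := P'.parts)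
        (fun c => i ∈ c)
      rw [hone, Finset.card_singleton] at this
      omega
    rw [hcardfilter, nsmul_eq_mul]
    have hpos : 1 ≤ P'.parts.card := by
      have := P'.parts_nonempty (by simpa [Finset.bot_eq_empty] using hs.ne_empty)
      exact Finset.card_pos.2 this
    have hco := coeff_eq (R := R) P'.parts.card
    rw [if_neg (show ¬ P'.parts.card = 0 by omega)] at hco
    have : (-1 : R) ^ (P'.parts.card - 1) * ((P'.parts.card - 1).factorial : R)
          * ∏ b ∈ P'.parts, χ b
        + ((P'.parts.card - 1 : ℕ) : R)
          * ((-1 : R) ^ (P'.parts.card - 2) * ((P'.parts.card - 2).factorial : R)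
            * ∏ b ∈ P'.parts, χ b)
        = (if P'.parts.card = 1 then 1 else 0) * ∏ b ∈ P'.parts, χ b := by
      rw [← hco]; ring
    rw [this]
    by_cases h1 : P'.parts.card = 1
    · obtain ⟨b, hb⟩ := Finset.card_eq_one.1 h1
      have hbs : b = s := by
        have := P'.sup_parts
        rw [hb, Finset.sup_singleton] at this
        exact this
      rw [if_pos h1, hb, hbs, if_pos rfl, Finset.prod_singleton, one_mul]
    · rw [if_neg h1, zero_mul, if_neg]
      intro h
      apply h1
      rw [h, Finset.card_singleton]
  rw [Finset.sum_congr rfl step]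
  -- Step 3: the remaining sum picks out the indiscrete partition.
  have hmem : ({s} : Finset (Finset ι)) ∈ partsSet s :=
    mem_partsSet.2 ⟨Finpartition.indiscrete
      (by simpa [Finset.bot_eq_empty] using hs.ne_empty), rfl⟩
  rw [Finset.sum_eq_single_of_mem ({s} : Finset (Finset ι)) hmem
    (fun b _ hb => if_neg hb), if_pos rfl]
end

section
/- Assume in addition that N ≥ 2 and that X₁ is square-integrable. Then ℙ-almost surely, E[(X₁ − S/N)(X₂ − S/N) | S] = ((S/N)² − E[X₁² | S]) / (N − 1). -/
open MeasureTheory ProbabilityTheory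

lemma aux_mul_int {Ω : Type*} [MeasurableSpace Ω] {P : Measure Ω} {f g : Ω → ℝ}
    (hf : MemLp f 2 P) (hg : MemLp g 2 P) : Integrable (fun ω => f ω * g ω) P := by
  have h : MemLp (f • g) 1 P := hg.smul hf
    (hpqr := ⟨by rw [ENNReal.inv_two_add_inv_two, inv_one]⟩)
  exact memLp_one_iff_integrable.mp (by simpa [smul_eq_mul, Pi.mul_def] using h)

lemma aux_condExp_eq {Ω : Type*} [MeasurableSpace Ω] (P : Measure Ω) [IsProbabilityMeasure P]
    {S : Ω → ℝ} (hSm : Measurable S) {Y Z : Ω → ℝ}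
    (hY : Integrable Y P) (hZ : Integrable Z P)
    (h : ∀ B : Set ℝ, MeasurableSet B → ∫ ω in S ⁻¹' B, Y ω ∂P = ∫ ω in S ⁻¹' B, Z ω ∂P) :
    P[Y | MeasurableSpace.comap S (borel ℝ)] =ᵐ[P] P[Z | MeasurableSpace.comap S (borel ℝ)] := by
  have hborel : (borel ℝ) = (inferInstance : MeasurableSpace ℝ) := BorelSpace.measurable_eq.symm
  have hmLe : MeasurableSpace.comap S (borel ℝ) ≤ (inferInstance : MeasurableSpace Ω) := by
    rw [hborel]; exact hSm.comap_le
  haveI : IsFiniteMeasure (P.trim hmLe) :=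
    ⟨by rw [trim_measurableSet_eq hmLe MeasurableSet.univ]; exact measure_lt_top P _⟩
  refine ae_eq_condExp_of_forall_setIntegral_eq hmLe hZ
    (fun s _ _ => integrable_condExp.integrableOn) (fun s hs hμs => ?_)
    stronglyMeasurable_condExp.aestronglyMeasurable
  rw [setIntegral_condExp hmLe hY hs]
  obtain ⟨B, hB, rfl⟩ := hs
  exact h B hB

lemma aux_vec_law {Ω : Type*} [MeasurableSpace Ω] (P : Measure Ω) [IsProbabilityMeasure P]
    {N : ℕ} (X : Fin N → Ω → ℝ) (hXmeas : ∀ i, Measurable (X i))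
    (hXindep : iIndepFun X P)
    (hXident : ∀ i j, IdentDistrib (X i) (X j) P P) (i0 : Fin N) (σ : Equiv.Perm (Fin N)) :
    Measure.map (fun ω k => X (σ k) ω) P = Measure.pi (fun _ => Measure.map (X i0) P) := by
  haveI : IsProbabilityMeasure (Measure.map (X i0) P) :=
    Measure.isProbabilityMeasure_map (hXmeas i0).aemeasurable
  refine (Measure.pi_eq fun s hs => ?_).symm
  have hmeasvec : Measurable (fun ω k => X (σ k) ω) :=
    measurable_pi_lambda _ fun k => hXmeas (σ k)
  rw [Measure.map_apply hmeasvec (MeasurableSet.univ_pi hs)]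
  have hpre : (fun ω k => X (σ k) ω) ⁻¹' Set.pi Set.univ s
      = ⋂ j ∈ Finset.univ, X j ⁻¹' (s (σ.symm j)) := by
    ext ω
    simp only [Set.mem_preimage, Set.mem_univ_pi, Set.mem_iInter, Finset.mem_univ, forall_true_left]
    constructor
    · intro h j
      simpa using h (σ.symm j)
    · intro h k
      simpa using h (σ k)
  rw [hpre, hXindep.measure_inter_preimage_eq_mul Finset.univ (fun j _ => hs (σ.symm j))]
  rw [← Equiv.prod_comp σ (fun j => P (X j ⁻¹' s (σ.symm j)))]
  refine Finset.prod_congr rfl fun k _ => ?_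
  rw [Equiv.symm_apply_apply, ← (hXident (σ k) i0).map_eq, Measure.map_apply (hXmeas _) (hs k)]

lemma aux_triple_law {Ω : Type*} [MeasurableSpace Ω] (P : Measure Ω) [IsProbabilityMeasure P]
    {N : ℕ} (X : Fin N → Ω → ℝ) (hXmeas : ∀ i, Measurable (X i))
    (hXindep : iIndepFun X P)
    (hXident : ∀ i j, IdentDistrib (X i) (X j) P P)
    (S : Ω → ℝ) (hS : S = fun ω => ∑ i, X i ω)
    (i0 i1 : Fin N) (h01 : i0 ≠ i1) (i j : Fin N) (hij : i ≠ j) :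
    Measure.map (fun ω => (X i ω, X j ω, S ω)) P
      = Measure.map (fun ω => (X i0 ω, X i1 ω, S ω)) P := by
  classical
  set τ := Equiv.swap i0 i with hτ
  set k := τ j with hk
  have hτj : τ k = j := Equiv.swap_apply_self _ _ _
  have hk0 : i0 ≠ k := by
    intro h
    apply hij
    have h2 : τ i0 = τ k := congrArg τ h
    rw [hτj, Equiv.swap_apply_left] at h2
    exact h2
  set σ := (Equiv.swap i1 k).trans τ with hσ
  have hσ0 : σ i0 = i := by
    rw [hσ]
    simp only [Equiv.trans_apply]
    rw [Equiv.swap_apply_of_ne_of_ne h01 hk0, Equiv.swap_apply_left]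
  have hσ1 : σ i1 = j := by
    rw [hσ]
    simp only [Equiv.trans_apply]
    rw [Equiv.swap_apply_left, hτj]
  set G : (Fin N → ℝ) → ℝ × ℝ × ℝ := fun f => (f i0, f i1, ∑ m, f m) with hG
  have hGmeas : Measurable G :=
    (measurable_pi_apply i0).prodMk ((measurable_pi_apply i1).prodMk
      (Finset.measurable_sum _ fun m _ => measurable_pi_apply m))
  have hsum : ∀ ω, ∑ m, X (σ m) ω = ∑ m, X m ω := fun ω => Equiv.sum_comp σ (fun m => X m ω)
  have e1 : (fun ω => (X i ω, X j ω, S ω)) = G ∘ (fun ω m => X (σ m) ω) := by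
    funext ω
    simp only [Function.comp_apply, hG, hσ0, hσ1, hsum ω, hS]
  have e2 : (fun ω => (X i0 ω, X i1 ω, S ω)) = G ∘ (fun ω m => X m ω) := by
    funext ω
    simp only [Function.comp_apply, hG, hS]
  have hv1 := aux_vec_law P X hXmeas hXindep hXident i0 σ
  have hv2 := aux_vec_law P X hXmeas hXindep hXident i0 (Equiv.refl (Fin N))
  simp only [Equiv.refl_apply] at hv2
  rw [e1, e2,
    ← Measure.map_map hGmeas (measurable_pi_lambda _ fun m => hXmeas (σ m)),
    ← Measure.map_map hGmeas (measurable_pi_lambda _ fun m => hXmeas m), hv1, hv2]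

lemma aux_exch {Ω : Type*} [MeasurableSpace Ω] (P : Measure Ω) [IsProbabilityMeasure P]
    {N : ℕ} (X : Fin N → Ω → ℝ) (hXmeas : ∀ i, Measurable (X i))
    (hXindep : iIndepFun X P)
    (hXident : ∀ i j, IdentDistrib (X i) (X j) P P)
    (S : Ω → ℝ) (hS : S = fun ω => ∑ i, X i ω)
    (i0 i1 : Fin N) (h01 : i0 ≠ i1)
    (φ : ℝ × ℝ × ℝ → ℝ) (hφ : Measurable φ)
    (hint : Integrable (fun ω => φ (X i0 ω, X i1 ω, S ω)) P)
    (i j : Fin N) (hij : i ≠ j) :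
    P[(fun ω => φ (X i ω, X j ω, S ω)) | MeasurableSpace.comap S (borel ℝ)]
      =ᵐ[P] P[(fun ω => φ (X i0 ω, X i1 ω, S ω)) | MeasurableSpace.comap S (borel ℝ)] := by
  have hSm : Measurable S := by
    rw [hS]; exact Finset.measurable_sum _ fun i _ => hXmeas i
  have hTij : Measurable (fun ω => (X i ω, X j ω, S ω)) :=
    (hXmeas i).prodMk ((hXmeas j).prodMk hSm)
  have hT01 : Measurable (fun ω => (X i0 ω, X i1 ω, S ω)) :=
    (hXmeas i0).prodMk ((hXmeas i1).prodMk hSm)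
  have hlaw := aux_triple_law P X hXmeas hXindep hXident S hS i0 i1 h01 i j hij
  have hid : IdentDistrib (fun ω => φ (X i ω, X j ω, S ω))
      (fun ω => φ (X i0 ω, X i1 ω, S ω)) P P :=
    IdentDistrib.comp ⟨hTij.aemeasurable, hT01.aemeasurable, hlaw⟩ hφ
  have hint' : Integrable (fun ω => φ (X i ω, X j ω, S ω)) P := hid.integrable_iff.mpr hint
  refine aux_condExp_eq P hSm hint' hint fun B hB => ?_
  have hA : MeasurableSet ((Set.univ : Set ℝ) ×ˢ ((Set.univ : Set ℝ) ×ˢ B)) :=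
    MeasurableSet.univ.prod (MeasurableSet.univ.prod hB)
  have hpre1 : S ⁻¹' B = (fun ω => (X i ω, X j ω, S ω)) ⁻¹' (Set.univ ×ˢ (Set.univ ×ˢ B)) := by
    ext ω; simp
  have hpre2 : S ⁻¹' B = (fun ω => (X i0 ω, X i1 ω, S ω)) ⁻¹' (Set.univ ×ˢ (Set.univ ×ˢ B)) := by
    ext ω; simp
  have e1 : ∫ ω in S ⁻¹' B, φ (X i ω, X j ω, S ω) ∂P
      = ∫ y in (Set.univ ×ˢ (Set.univ ×ˢ B)), φ y
          ∂(Measure.map (fun ω => (X i ω, X j ω, S ω)) P) := by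
    rw [setIntegral_map hA hφ.aestronglyMeasurable hTij.aemeasurable, ← hpre1]
  have e2 : ∫ ω in S ⁻¹' B, φ (X i0 ω, X i1 ω, S ω) ∂P
      = ∫ y in (Set.univ ×ˢ (Set.univ ×ˢ B)), φ y
          ∂(Measure.map (fun ω => (X i0 ω, X i1 ω, S ω)) P) := by
    rw [setIntegral_map hA hφ.aestronglyMeasurable hT01.aemeasurable, ← hpre2]
  rw [e1, e2, hlaw]

lemma aux_count (N : ℕ) (q aa : ℝ) :
    ∑ i : Fin N, ∑ j : Fin N, (if i = j then q else aa)
      = N * q + ((N : ℝ) * ((N : ℝ) - 1)) * aa := by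
  have hinner : ∀ i : Fin N, ∑ j : Fin N, (if i = j then q else aa) = (N : ℝ) * aa + (q - aa) := by
    intro i
    have h : ∀ j : Fin N, (if i = j then q else aa) = aa + (if i = j then q - aa else 0) := by
      intro j; by_cases h : i = j <;> simp [h]
    rw [Finset.sum_congr rfl fun j _ => h j, Finset.sum_add_distrib, Finset.sum_const,
      Finset.card_univ, Fintype.card_fin, Finset.sum_ite_eq Finset.univ i (fun _ => q - aa)]
    simp [nsmul_eq_mul]
  rw [Finset.sum_congr rfl fun i _ => hinner i, Finset.sum_const, Finset.card_univ,
    Fintype.card_fin, nsmul_eq_mul]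
  ring

/-- For iid square-integrable random variables with `N ≥ 2`,
`E[(X₁ − S/N)(X₂ − S/N) | S] = ((S/N)² − E[X₁² | S]) / (N − 1)` a.s. -/
theorem stmt_9 {Ω : Type*} [MeasurableSpace Ω] (P : Measure Ω) [IsProbabilityMeasure P]
    (N : ℕ) (hN : 2 ≤ N) (X : Fin N → Ω → ℝ) (hXmeas : ∀ i, Measurable (X i))
    (hXindep : iIndepFun X P)
    (hXident : ∀ i j, IdentDistrib (X i) (X j) P P)
    (hXint : ∀ i, Integrable (X i) P)
    (hXsq : MemLp (X ⟨0, by omega⟩) 2 P)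
    (S : Ω → ℝ) (hS : S = fun ω => ∑ i, X i ω) :
    P[fun ω => (X ⟨0, by omega⟩ ω - S ω / N) * (X ⟨1, by omega⟩ ω - S ω / N)
        | MeasurableSpace.comap S (borel ℝ)]
      =ᵐ[P] fun ω =>
        ((S ω / N) ^ 2
            - (P[fun ω => (X ⟨0, by omega⟩ ω) ^ 2 | MeasurableSpace.comap S (borel ℝ)]) ω)
          / ((N : ℝ) - 1) := by
  have hNR : (2 : ℝ) ≤ (N : ℝ) := by exact_mod_cast hN
  have hN0 : (N : ℝ) ≠ 0 := by linarith
  have hN1 : (N : ℝ) - 1 ≠ 0 := by linarith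
  have hi0lt : (0 : ℕ) < N := by omega
  have hi1lt : (1 : ℕ) < N := by omega
  set i0 : Fin N := ⟨0, hi0lt⟩ with hi0
  set i1 : Fin N := ⟨1, hi1lt⟩ with hi1
  have h01 : i0 ≠ i1 := by
    intro h
    have h2 := congrArg Fin.val h
    simp [hi0, hi1] at h2
  have hSm : Measurable S := by
    rw [hS]; exact Finset.measurable_sum _ fun i _ => hXmeas i
  have hborel : (borel ℝ) = (inferInstance : MeasurableSpace ℝ) := BorelSpace.measurable_eq.symm
  have hmLe : MeasurableSpace.comap S (borel ℝ) ≤ (inferInstance : MeasurableSpace Ω) := by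
    rw [hborel]; exact hSm.comap_le
  haveI : IsFiniteMeasure (P.trim hmLe) :=
    ⟨by rw [trim_measurableSet_eq hmLe MeasurableSet.univ]; exact measure_lt_top P _⟩
  have hSmS : Measurable[MeasurableSpace.comap S (borel ℝ)] S := fun t ht =>
    MeasurableSpace.measurableSet_comap.mpr ⟨t, by rw [hborel]; exact ht, rfl⟩
  have hL2 : ∀ i, MemLp (X i) 2 P := fun i => (hXident i0 i).memLp_snd hXsq
  have hSL2 : MemLp S 2 P := by
    rw [hS]; exact memLp_finset_sum _ fun i _ => hL2 i
  have hSdL2 : MemLp (fun ω => S ω / (N : ℝ)) 2 P := by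
    have := hSL2.const_mul (N : ℝ)⁻¹
    simpa [div_eq_inv_mul] using this
  have haL2 : ∀ i, MemLp (fun ω => X i ω - S ω / N) 2 P := fun i => (hL2 i).sub hSdL2
  have haInt : ∀ i j,
      Integrable (fun ω => (X i ω - S ω / N) * (X j ω - S ω / N)) P :=
    fun i j => aux_mul_int (haL2 i) (haL2 j)
  have hintXS : ∀ i, Integrable (fun ω => X i ω * S ω) P :=
    fun i => aux_mul_int (hL2 i) hSL2
  -- exchangeability consequences
  have hGex : ∀ i j : Fin N, i ≠ j →
      P[(fun ω => (X i ω - S ω / N) * (X j ω - S ω / N)) | MeasurableSpace.comap S (borel ℝ)]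
        =ᵐ[P] P[(fun ω => (X i0 ω - S ω / N) * (X i1 ω - S ω / N)) | MeasurableSpace.comap S (borel ℝ)] := by
    intro i j hij
    exact aux_exch P X hXmeas hXindep hXident S hS i0 i1 h01
      (fun p => (p.1 - p.2.2 / N) * (p.2.1 - p.2.2 / N))
      (by fun_prop) (haInt i0 i1) i j hij
  have hQex : ∀ i : Fin N,
      P[(fun ω => (X i ω - S ω / N) * (X i ω - S ω / N)) | MeasurableSpace.comap S (borel ℝ)]
        =ᵐ[P] P[(fun ω => (X i0 ω - S ω / N) * (X i0 ω - S ω / N)) | MeasurableSpace.comap S (borel ℝ)] := by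
    intro i
    rcases eq_or_ne i i0 with rfl | hne
    · exact Filter.EventuallyEq.rfl
    · exact aux_exch P X hXmeas hXindep hXident S hS i0 i1 h01
        (fun p => (p.1 - p.2.2 / N) * (p.1 - p.2.2 / N))
        (by fun_prop) (haInt i0 i0) i i0 hne
  have hXSex : ∀ i : Fin N,
      P[(fun ω => X i ω * S ω) | MeasurableSpace.comap S (borel ℝ)] =ᵐ[P] P[(fun ω => X i0 ω * S ω) | MeasurableSpace.comap S (borel ℝ)] := by
    intro i
    rcases eq_or_ne i i0 with rfl | hne
    · exact Filter.EventuallyEq.rfl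
    · exact aux_exch P X hXmeas hXindep hXident S hS i0 i1 h01
        (fun p => p.1 * p.2.2) (by fun_prop) (hintXS i0) i i0 hne
  -- E[X_{i0} S | S] = S²/N
  have hXS0 : P[(fun ω => X i0 ω * S ω) | MeasurableSpace.comap S (borel ℝ)] =ᵐ[P] fun ω => S ω * S ω / N := by
    have hfs : (fun ω => S ω * S ω) = ∑ i : Fin N, (fun ω => X i ω * S ω) := by
      funext ω
      simp only [Finset.sum_apply]
      have hSω : S ω = ∑ i, X i ω := by rw [hS]
      rw [← Finset.sum_mul, ← hSω]
    have h1 : P[(fun ω => S ω * S ω) | MeasurableSpace.comap S (borel ℝ)]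
        = fun ω => S ω * S ω :=
      condExp_of_stronglyMeasurable hmLe ((hSmS.mul hSmS).stronglyMeasurable)
        (aux_mul_int hSL2 hSL2)
    have h2 : P[∑ i : Fin N, (fun ω => X i ω * S ω) | MeasurableSpace.comap S (borel ℝ)]
        =ᵐ[P] ∑ i : Fin N, P[(fun ω => X i ω * S ω) | MeasurableSpace.comap S (borel ℝ)] :=
      condExp_finset_sum (fun i _ => hintXS i) _
    have h3 : ∀ᵐ ω ∂P, ∀ i : Fin N,
        (P[(fun ω' => X i ω' * S ω') | MeasurableSpace.comap S (borel ℝ)]) ω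
          = (P[(fun ω' => X i0 ω' * S ω') | MeasurableSpace.comap S (borel ℝ)]) ω :=
      ae_all_iff.mpr fun i => hXSex i
    have h4 : (fun ω => S ω * S ω) =ᵐ[P]
        fun ω => N * (P[(fun ω' => X i0 ω' * S ω') | MeasurableSpace.comap S (borel ℝ)]) ω := by
      calc (fun ω => S ω * S ω)
          = P[(fun ω => S ω * S ω) | MeasurableSpace.comap S (borel ℝ)] := h1.symm
        _ = P[∑ i : Fin N, (fun ω => X i ω * S ω) | MeasurableSpace.comap S (borel ℝ)] := by
            rw [← hfs]
        _ =ᵐ[P] ∑ i : Fin N, P[(fun ω => X i ω * S ω) | MeasurableSpace.comap S (borel ℝ)] := h2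
        _ =ᵐ[P] fun ω => N * (P[(fun ω' => X i0 ω' * S ω') | MeasurableSpace.comap S (borel ℝ)]) ω := by
            filter_upwards [h3] with ω hω
            rw [Finset.sum_apply, Finset.sum_congr rfl fun i _ => hω i, Finset.sum_const,
              Finset.card_univ, Fintype.card_fin, nsmul_eq_mul]
    filter_upwards [h4] with ω hω
    rw [eq_div_iff hN0, mul_comm _ (N : ℝ), ← hω]
  -- E[(X_{i0} - S/N)² | S] = E[X_{i0}²|S] - S²/N²
  have hQ0 : P[(fun ω => (X i0 ω - S ω / N) * (X i0 ω - S ω / N)) | MeasurableSpace.comap S (borel ℝ)]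
      =ᵐ[P] fun ω => (P[(fun ω' => X i0 ω' ^ 2) | MeasurableSpace.comap S (borel ℝ)]) ω - S ω * S ω / ((N : ℝ) * N) := by
    have hF1int : Integrable (fun ω => X i0 ω ^ 2) P := by
      simpa [pow_two] using aux_mul_int (hL2 i0) (hL2 i0)
    have hF3 : P[(fun ω => S ω / N * (S ω / N)) | MeasurableSpace.comap S (borel ℝ)]
        = fun ω => S ω / N * (S ω / N) :=
      condExp_of_stronglyMeasurable hmLe
        (((hSmS.div_const _).mul (hSmS.div_const _)).stronglyMeasurable)
        (aux_mul_int hSdL2 hSdL2)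
    have hdecomp : (fun ω => (X i0 ω - S ω / N) * (X i0 ω - S ω / N))
        = fun ω => (X i0 ω ^ 2 - (2 / (N : ℝ)) * (X i0 ω * S ω)) + S ω / N * (S ω / N) := by
      funext ω; field_simp; ring
    rw [hdecomp]
    have hsub_int : Integrable (fun ω => X i0 ω ^ 2 - (2 / (N : ℝ)) * (X i0 ω * S ω)) P :=
      hF1int.sub ((hintXS i0).const_mul _)
    have hF3int : Integrable (fun ω => S ω / N * (S ω / N)) P := aux_mul_int hSdL2 hSdL2
    have e1 : P[(fun ω => (X i0 ω ^ 2 - (2 / (N : ℝ)) * (X i0 ω * S ω)) + S ω / N * (S ω / N))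
          | MeasurableSpace.comap S (borel ℝ)]
        =ᵐ[P] fun ω =>
          (P[(fun ω' => X i0 ω' ^ 2 - (2 / (N : ℝ)) * (X i0 ω' * S ω'))
            | MeasurableSpace.comap S (borel ℝ)]) ω
          + (P[(fun ω' => S ω' / N * (S ω' / N)) | MeasurableSpace.comap S (borel ℝ)]) ω :=
      condExp_add hsub_int hF3int _
    have e2 : P[(fun ω => X i0 ω ^ 2 - (2 / (N : ℝ)) * (X i0 ω * S ω))
          | MeasurableSpace.comap S (borel ℝ)]
        =ᵐ[P] fun ω =>
          (P[(fun ω' => X i0 ω' ^ 2) | MeasurableSpace.comap S (borel ℝ)]) ω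
          - (P[(fun ω' => (2 / (N : ℝ)) * (X i0 ω' * S ω'))
            | MeasurableSpace.comap S (borel ℝ)]) ω :=
      condExp_sub hF1int ((hintXS i0).const_mul _) _
    have e3 : P[(fun ω => (2 / (N : ℝ)) * (X i0 ω * S ω)) | MeasurableSpace.comap S (borel ℝ)]
        =ᵐ[P] fun ω =>
          (2 / (N : ℝ)) * (P[(fun ω' => X i0 ω' * S ω') | MeasurableSpace.comap S (borel ℝ)]) ω :=
      condExp_smul ((2 : ℝ) / N) _ _
    filter_upwards [e1, e2, e3, hXS0] with ω h1 h2 h3 h4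
    rw [h1, h2, h3, h4, congrFun hF3 ω]
    field_simp
    ring
  -- double sum is zero
  have hdbl : (0 : Ω → ℝ) =ᵐ[P] fun ω =>
      ∑ i : Fin N, ∑ j : Fin N,
        (P[(fun ω' => (X i ω' - S ω' / N) * (X j ω' - S ω' / N)) | MeasurableSpace.comap S (borel ℝ)]) ω := by
    have hzero : (fun ω => ∑ i : Fin N, ∑ j : Fin N,
        (X i ω - S ω / N) * (X j ω - S ω / N)) = (0 : Ω → ℝ) := by
      funext ω
      rw [← Finset.sum_mul_sum]
      have hsa : ∑ i : Fin N, (X i ω - S ω / N) = 0 := by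
        rw [Finset.sum_sub_distrib, Finset.sum_const, Finset.card_univ, Fintype.card_fin]
        have hSω : S ω = ∑ i, X i ω := by rw [hS]
        rw [← hSω, nsmul_eq_mul]
        field_simp
        simp
      rw [hsa, zero_mul, Pi.zero_apply]
    have hinner : ∀ i : Fin N,
        P[∑ j : Fin N, (fun ω => (X i ω - S ω / N) * (X j ω - S ω / N))
            | MeasurableSpace.comap S (borel ℝ)]
          =ᵐ[P] ∑ j : Fin N, P[(fun ω => (X i ω - S ω / N) * (X j ω - S ω / N))
            | MeasurableSpace.comap S (borel ℝ)] :=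
      fun i => condExp_finset_sum (fun j _ => haInt i j) _
    have houter :
        P[∑ i : Fin N, ∑ j : Fin N, (fun ω => (X i ω - S ω / N) * (X j ω - S ω / N))
            | MeasurableSpace.comap S (borel ℝ)]
          =ᵐ[P] ∑ i : Fin N, P[∑ j : Fin N, (fun ω => (X i ω - S ω / N) * (X j ω - S ω / N))
            | MeasurableSpace.comap S (borel ℝ)] :=
      condExp_finset_sum (fun i _ => integrable_finset_sum' _ fun j _ => haInt i j) _
    have hfs : (0 : Ω → ℝ)
        = ∑ i : Fin N, ∑ j : Fin N, (fun ω => (X i ω - S ω / N) * (X j ω - S ω / N)) := by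
      funext ω
      simp only [Finset.sum_apply, Pi.zero_apply]
      simpa using (congrFun hzero ω).symm
    calc (0 : Ω → ℝ) = P[(0 : Ω → ℝ) | MeasurableSpace.comap S (borel ℝ)] := condExp_zero.symm
      _ = P[∑ i : Fin N, ∑ j : Fin N, (fun ω => (X i ω - S ω / N) * (X j ω - S ω / N))
            | MeasurableSpace.comap S (borel ℝ)] := by rw [← hfs]
      _ =ᵐ[P] ∑ i : Fin N, P[∑ j : Fin N, (fun ω => (X i ω - S ω / N) * (X j ω - S ω / N))
            | MeasurableSpace.comap S (borel ℝ)] := houter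
      _ =ᵐ[P] fun ω => ∑ i : Fin N, ∑ j : Fin N,
            (P[(fun ω' => (X i ω' - S ω' / N) * (X j ω' - S ω' / N))
              | MeasurableSpace.comap S (borel ℝ)]) ω := by
          filter_upwards [ae_all_iff.mpr hinner] with ω hω
          rw [Finset.sum_apply]
          refine Finset.sum_congr rfl fun i _ => ?_
          rw [hω i, Finset.sum_apply]
  -- put everything together
  have hGae : ∀ᵐ ω ∂P, ∀ p : Fin N × Fin N, p.1 ≠ p.2 →
      (P[(fun ω' => (X p.1 ω' - S ω' / N) * (X p.2 ω' - S ω' / N)) | MeasurableSpace.comap S (borel ℝ)]) ω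
        = (P[(fun ω' => (X i0 ω' - S ω' / N) * (X i1 ω' - S ω' / N)) | MeasurableSpace.comap S (borel ℝ)]) ω := by
    rw [ae_all_iff]
    intro p
    rcases eq_or_ne p.1 p.2 with h | h
    · simp [h]
    · filter_upwards [hGex p.1 p.2 h] with ω hω _
      exact hω
  have hQae : ∀ᵐ ω ∂P, ∀ i : Fin N,
      (P[(fun ω' => (X i ω' - S ω' / N) * (X i ω' - S ω' / N)) | MeasurableSpace.comap S (borel ℝ)]) ω
        = (P[(fun ω' => (X i0 ω' - S ω' / N) * (X i0 ω' - S ω' / N)) | MeasurableSpace.comap S (borel ℝ)]) ω :=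
    ae_all_iff.mpr fun i => hQex i
  show P[(fun ω => (X i0 ω - S ω / N) * (X i1 ω - S ω / N)) | MeasurableSpace.comap S (borel ℝ)]
      =ᵐ[P] fun ω => ((S ω / N) ^ 2 - (P[(fun ω' => X i0 ω' ^ 2) | MeasurableSpace.comap S (borel ℝ)]) ω) / ((N : ℝ) - 1)
  filter_upwards [hdbl, hGae, hQae, hQ0] with ω h0 hG hQ hq0
  set A := (P[(fun ω' => (X i0 ω' - S ω' / N) * (X i1 ω' - S ω' / N)) | MeasurableSpace.comap S (borel ℝ)]) ω with hA
  set Q := (P[(fun ω' => (X i0 ω' - S ω' / N) * (X i0 ω' - S ω' / N)) | MeasurableSpace.comap S (borel ℝ)]) ω with hQdef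
  set B := (P[(fun ω' => X i0 ω' ^ 2) | MeasurableSpace.comap S (borel ℝ)]) ω with hB
  have hsum : ∑ i : Fin N, ∑ j : Fin N,
      (P[(fun ω' => (X i ω' - S ω' / N) * (X j ω' - S ω' / N)) | MeasurableSpace.comap S (borel ℝ)]) ω
      = (N : ℝ) * Q + ((N : ℝ) * ((N : ℝ) - 1)) * A := by
    rw [← aux_count N Q A]
    refine Finset.sum_congr rfl fun i _ => Finset.sum_congr rfl fun j _ => ?_
    rcases eq_or_ne i j with rfl | hij
    · rw [if_pos rfl]; exact hQ i
    · rw [if_neg hij]; exact hG (i, j) hij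
  have h00 : (0 : ℝ) = (N : ℝ) * Q + ((N : ℝ) * ((N : ℝ) - 1)) * A := by
    rw [← hsum]; exact h0
  have h6 : A * ((N : ℝ) - 1) = -Q := by
    have h5 : (N : ℝ) * (A * ((N : ℝ) - 1)) = (N : ℝ) * (-Q) := by ring_nf; ring_nf at h00; linarith
    exact mul_left_cancel₀ hN0 h5
  rw [eq_div_iff hN1, h6, hq0]
  field_simp
  ring
end

section
/- The conditional distribution of X₁ given S is Gaussian with mean S/N and variance v(1 − 1/N): for (ℙ ∘ S⁻¹)-almost every s ∈ ℝ, condDistrib X₁ S ℙ evaluated at s equals the Gaussian measure on ℝ with mean s/N and variance v·(1 − 1/N). -/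
open MeasureTheory ProbabilityTheory Real
open scoped NNReal ENNReal

lemma measurable_gpdf2 (w : ℝ≥0) :
    Measurable (fun p : ℝ × ℝ => gaussianPDF p.1 w p.2) := by
  unfold gaussianPDF gaussianPDFReal
  exact (measurable_const.mul (((measurable_snd.sub measurable_fst).pow_const 2).neg.div_const
    _).exp).ennreal_ofReal

lemma gpdf_ne_top (m : ℝ) (w : ℝ≥0) (x : ℝ) : gaussianPDF m w x ≠ ⊤ :=
  ENNReal.ofReal_ne_top

noncomputable def gKer (c : ℝ) (w : ℝ≥0) : ProbabilityTheory.Kernel ℝ ℝ where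
  toFun := fun s => gaussianReal (c * s) w
  measurable' := by
    rcases eq_or_ne w 0 with rfl | hw
    · simp only [gaussianReal_zero_var]
      exact Measure.measurable_dirac.comp (measurable_const_mul c)
    · apply Measure.measurable_of_measurable_coe
      intro A hA
      simp_rw [gaussianReal_apply _ hw]
      exact (Measurable.lintegral_prod_right'
        ((measurable_gpdf2 w).comp ((measurable_fst.const_mul c).prodMk measurable_snd)))

@[simp] lemma gKer_apply (c : ℝ) (w : ℝ≥0) (s : ℝ) : gKer c w s = gaussianReal (c * s) w := rfl

instance (c : ℝ) (w : ℝ≥0) : IsMarkovKernel (gKer c w) :=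
  ⟨fun s => by rw [gKer_apply]; infer_instance⟩

lemma gauss_mul {v₁ v₂ : ℝ≥0} (h₁ : v₁ ≠ 0) (h₂ : v₂ ≠ 0) (x s : ℝ) :
    gaussianPDFReal 0 v₁ x * gaussianPDFReal 0 v₂ (s - x) =
      gaussianPDFReal 0 (v₁ + v₂) s *
        gaussianPDFReal (((v₁ / (v₁ + v₂) : ℝ≥0) : ℝ) * s) (v₁ * v₂ / (v₁ + v₂)) x := by
  have ha : (0:ℝ) < v₁ := by positivity
  have hb : (0:ℝ) < v₂ := by positivity
  have hab : (0:ℝ) < (v₁:ℝ) + v₂ := by linarith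
  have hπ : (0:ℝ) < π := pi_pos
  unfold gaussianPDFReal
  push_cast
  rw [mul_mul_mul_comm, mul_mul_mul_comm ((√(2 * π * ((v₁:ℝ) + v₂)))⁻¹)]
  congr 1
  · rw [← mul_inv, ← mul_inv, ← Real.sqrt_mul (by positivity), ← Real.sqrt_mul (by positivity)]
    congr 2
    field_simp
  · rw [← Real.exp_add, ← Real.exp_add]
    congr 1
    field_simp
    ring

lemma gauss_joint (v₁ v₂ : ℝ≥0) (h₁ : v₁ ≠ 0) :
    Measure.map (fun p : ℝ × ℝ => (p.1 + p.2, p.1))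
        ((gaussianReal 0 v₁).prod (gaussianReal 0 v₂))
      = (gaussianReal 0 (v₁ + v₂)) ⊗ₘ
          gKer ((v₁ / (v₁ + v₂) : ℝ≥0) : ℝ) (v₁ * v₂ / (v₁ + v₂)) := by
  have hT : Measurable (fun p : ℝ × ℝ => (p.1 + p.2, p.1)) := by fun_prop
  rcases eq_or_ne v₂ 0 with rfl | h₂
  · -- degenerate case: second variance zero
    simp only [add_zero, mul_zero, zero_div, div_self h₁]
    rw [gaussianReal_zero_var, Measure.prod_dirac]
    ext E hE
    have hset : MeasurableSet ((fun x : ℝ => (x, (0:ℝ))) ⁻¹'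
        ((fun p : ℝ × ℝ => (p.1 + p.2, p.1)) ⁻¹' E)) :=
      (measurable_id.prodMk measurable_const) (hT hE)
    rw [Measure.compProd_apply hE, Measure.map_apply hT hE,
      Measure.map_apply (by fun_prop) (hT hE),
      ← lintegral_indicator_one hset]
    refine lintegral_congr fun s => ?_
    rw [gKer_apply, NNReal.coe_one, one_mul, gaussianReal_zero_var,
      Measure.dirac_apply' _ (measurable_prodMk_left hE)]
    classical
    rw [Set.indicator_apply, Set.indicator_apply]
    simp only [Set.mem_preimage, add_zero]
  -- main case
  set c : ℝ := ((v₁ / (v₁ + v₂) : ℝ≥0) : ℝ) with hc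
  set w : ℝ≥0 := v₁ * v₂ / (v₁ + v₂) with hw
  have h12 : v₁ + v₂ ≠ 0 := by positivity
  have hwne : w ≠ 0 := by rw [hw]; positivity
  have key : ∀ x u : ℝ, gaussianPDF 0 v₁ x * gaussianPDF x v₂ u
      = gaussianPDF 0 (v₁ + v₂) u * gaussianPDF (c * u) w x := by
    intro x u
    unfold gaussianPDF
    rw [← ENNReal.ofReal_mul (gaussianPDFReal_nonneg _ _ _),
      ← ENNReal.ofReal_mul (gaussianPDFReal_nonneg _ _ _)]
    congr 1
    have h : gaussianPDFReal x v₂ u = gaussianPDFReal 0 v₂ (u - x) := by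
      rw [gaussianPDFReal_sub, zero_add]
    rw [h, gauss_mul h₁ h₂]
  classical
  ext E hE
  have hindE : Measurable (fun p : ℝ × ℝ => E.indicator (1 : ℝ × ℝ → ℝ≥0∞) p) :=
    measurable_one.indicator hE
  have hRHS : ((gaussianReal 0 (v₁ + v₂)) ⊗ₘ gKer c w) E
      = ∫⁻ u, gaussianPDF 0 (v₁ + v₂) u *
          ∫⁻ x, E.indicator 1 (u, x) * gaussianPDF (c * u) w x ∂volume ∂volume := by
    rw [Measure.compProd_apply hE, gaussianReal_of_var_ne_zero _ h12,
      lintegral_withDensity_eq_lintegral_mul _ (measurable_gaussianPDF _ _)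
        (Kernel.measurable_kernel_prodMk_left hE)]
    refine lintegral_congr fun u => ?_
    simp only [Pi.mul_apply, gKer_apply]
    congr 1
    rw [gaussianReal_apply _ hwne, ← lintegral_indicator (measurable_prodMk_left hE)]
    refine lintegral_congr fun x => ?_
    rw [Set.indicator_apply, Set.indicator_apply, Set.mem_preimage]
    split_ifs <;> simp
  have hLHS : (Measure.map (fun p : ℝ × ℝ => (p.1 + p.2, p.1))
        ((gaussianReal 0 v₁).prod (gaussianReal 0 v₂))) E
      = ∫⁻ x, gaussianPDF 0 v₁ x *
          ∫⁻ u, E.indicator 1 (u, x) * gaussianPDF x v₂ u ∂volume ∂volume := by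
    rw [Measure.map_apply hT hE, Measure.prod_apply (hT hE),
      gaussianReal_of_var_ne_zero _ h₁,
      lintegral_withDensity_eq_lintegral_mul _ (measurable_gaussianPDF _ _)
        (measurable_measure_prodMk_left (hT hE))]
    refine lintegral_congr fun x => ?_
    simp only [Pi.mul_apply]
    congr 1
    have hsec : MeasurableSet ((fun u : ℝ => (u, x)) ⁻¹' E) :=
      (measurable_id.prodMk measurable_const) hE
    have hpre : Prod.mk x ⁻¹' ((fun p : ℝ × ℝ => (p.1 + p.2, p.1)) ⁻¹' E)
        = (fun u => x + u) ⁻¹' ((fun u : ℝ => (u, x)) ⁻¹' E) := rfl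
    rw [hpre, ← Measure.map_apply (measurable_const_add x) hsec, gaussianReal_map_const_add,
      zero_add, gaussianReal_apply _ h₂, ← lintegral_indicator hsec]
    refine lintegral_congr fun u => ?_
    rw [Set.indicator_apply, Set.indicator_apply, Set.mem_preimage]
    split_ifs <;> simp
  rw [hLHS, hRHS]
  have hmeasA : Measurable (fun p : ℝ × ℝ =>
      E.indicator 1 (p.2, p.1) * (gaussianPDF 0 v₁ p.1 * gaussianPDF p.1 v₂ p.2)) :=
    (hindE.comp (measurable_snd.prodMk measurable_fst)).mul
      (((measurable_gpdf2 v₁).comp (measurable_const.prodMk measurable_fst)).mul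
        ((measurable_gpdf2 v₂).comp (measurable_fst.prodMk measurable_snd)))
  calc ∫⁻ x, gaussianPDF 0 v₁ x *
          ∫⁻ u, E.indicator 1 (u, x) * gaussianPDF x v₂ u ∂volume ∂volume
      = ∫⁻ x, ∫⁻ u, E.indicator 1 (u, x) *
          (gaussianPDF 0 v₁ x * gaussianPDF x v₂ u) ∂volume ∂volume := by
        refine lintegral_congr fun x => ?_
        rw [← lintegral_const_mul' _ _ (gpdf_ne_top _ _ _)]
        exact lintegral_congr fun u => by ring
    _ = ∫⁻ u, ∫⁻ x, E.indicator 1 (u, x) *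
          (gaussianPDF 0 v₁ x * gaussianPDF x v₂ u) ∂volume ∂volume :=
        lintegral_lintegral_swap hmeasA.aemeasurable
    _ = ∫⁻ u, gaussianPDF 0 (v₁ + v₂) u *
          ∫⁻ x, E.indicator 1 (u, x) * gaussianPDF (c * u) w x ∂volume ∂volume := by
        refine lintegral_congr fun u => ?_
        rw [← lintegral_const_mul' _ _ (gpdf_ne_top _ _ _)]
        refine lintegral_congr fun x => ?_
        rw [key x u]
        ring
lemma gauss_conv (v₁ v₂ : ℝ≥0) :
    Measure.map (fun p : ℝ × ℝ => p.1 + p.2)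
      ((gaussianReal 0 v₁).prod (gaussianReal 0 v₂)) = gaussianReal 0 (v₁ + v₂) := by
  rcases eq_or_ne v₁ 0 with rfl | h₁
  · rw [gaussianReal_zero_var, Measure.dirac_prod, Measure.map_map (by fun_prop) (by fun_prop)]
    have : ((fun p : ℝ × ℝ => p.1 + p.2) ∘ fun y : ℝ => ((0:ℝ), y)) = fun y => (0:ℝ) + y :=
      rfl
    rw [this, gaussianReal_map_const_add, zero_add, zero_add]
  · have h := congrArg Measure.fst (gauss_joint v₁ v₂ h₁)
    rwa [Measure.fst_compProd, Measure.fst,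
      Measure.map_map measurable_fst (by fun_prop)] at h

lemma sum_law {Ω : Type*} [MeasurableSpace Ω] (P : Measure Ω) [IsProbabilityMeasure P]
    (v : ℝ≥0) {N : ℕ} (X : Fin N → Ω → ℝ) (hXmeas : ∀ i, Measurable (X i))
    (hXindep : iIndepFun X P)
    (hXlaw : ∀ i, Measure.map (X i) P = gaussianReal 0 v) (t : Finset (Fin N)) :
    Measure.map (fun ω => ∑ i ∈ t, X i ω) P = gaussianReal 0 ((t.card : ℝ≥0) * v) := by
  classical
  induction t using Finset.induction_on with
  | empty =>
    simp only [Finset.sum_empty, Finset.card_empty, Nat.cast_zero, zero_mul]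
    rw [gaussianReal_zero_var]
    simp [Measure.map_const]
  | @insert a t ha ih =>
    have hT : Measurable (fun ω => ∑ i ∈ t, X i ω) := by
      exact Finset.measurable_sum t fun i _ => hXmeas i
    have hInd : IndepFun (fun ω => ∑ i ∈ t, X i ω) (X a) P := by
      have := hXindep.indepFun_finset_sum_of_notMem hXmeas ha
      convert this using 2
      simp
    have hpair : Measure.map (fun ω => ((∑ i ∈ t, X i ω), X a ω)) P
        = (gaussianReal 0 ((t.card : ℝ≥0) * v)).prod (gaussianReal 0 v) := by
      rw [← ih, ← hXlaw a]
      exact ((indepFun_iff_map_prod_eq_prod_map_map hT.aemeasurable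
        (hXmeas a).aemeasurable).mp hInd)
    have : Measure.map (fun ω => ∑ i ∈ insert a t, X i ω) P
        = Measure.map (fun p : ℝ × ℝ => p.1 + p.2)
            (Measure.map (fun ω => ((∑ i ∈ t, X i ω), X a ω)) P) := by
      rw [Measure.map_map (by fun_prop) (hT.prodMk (hXmeas a))]
      congr 1
      funext ω
      simp [Finset.sum_insert ha, add_comm]
    rw [this, hpair, gauss_conv, Finset.card_insert_of_notMem ha]
    congr 1
    push_cast
    ring

/-- For iid centered Gaussians of variance `v`, the conditional distribution of `X₁` given
`S` is Gaussian with mean `S/N` and variance `v(1 − 1/N)`. -/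
theorem stmt_10 {Ω : Type*} [MeasurableSpace Ω] 
    (P : Measure Ω) [IsProbabilityMeasure P]
    (v : NNReal) (hv : 0 < v) (N : ℕ) (hN : 1 ≤ N)
    (X : Fin N → Ω → ℝ) (hXmeas : ∀ i, Measurable (X i))
    (hXindep : iIndepFun X P)
    (hXlaw : ∀ i, Measure.map (X i) P = gaussianReal 0 v)
    (S : Ω → ℝ) (hS : S = fun ω => ∑ i, X i ω) :
    ∀ᵐ s ∂(Measure.map S P),
      condDistrib (X ⟨0, hN⟩) S P s
        = gaussianReal (s / N) (v * (1 - (N : NNReal)⁻¹)) := by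
  obtain ⟨M, rfl⟩ : ∃ M, N = M + 1 := ⟨N - 1, (Nat.succ_pred_eq_of_pos hN).symm⟩
  subst hS
  have hvR : (0:ℝ) < v := hv
  set i0 : Fin (M + 1) := ⟨0, hN⟩ with hi0
  set t : Finset (Fin (M + 1)) := Finset.univ.erase i0 with ht
  set T : Ω → ℝ := fun ω => ∑ i ∈ t, X i ω with hT
  have hTmeas : Measurable T := Finset.measurable_sum t fun i _ => hXmeas i
  have hSmeas : Measurable (fun ω => ∑ i, X i ω) :=
    Finset.measurable_sum _ fun i _ => hXmeas i
  have hcard : t.card = M := by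
    rw [ht, Finset.card_erase_of_mem (Finset.mem_univ _), Finset.card_univ, Fintype.card_fin]
    omega
  have hTlaw : Measure.map T P = gaussianReal 0 ((M : ℝ≥0) * v) := by
    rw [hT, sum_law P v X hXmeas hXindep hXlaw t, hcard]
  have hInd : IndepFun T (X i0) P := by
    have h := hXindep.indepFun_finset_sum_of_notMem hXmeas
      (show i0 ∉ t from Finset.notMem_erase i0 Finset.univ)
    convert h using 2
    funext ω
    simp
    rfl
  have hpair : Measure.map (fun ω => (X i0 ω, T ω)) P
      = (gaussianReal 0 v).prod (gaussianReal 0 ((M : ℝ≥0) * v)) := by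
    rw [← hXlaw i0, ← hTlaw]
    exact (indepFun_iff_map_prod_eq_prod_map_map (hXmeas i0).aemeasurable
      hTmeas.aemeasurable).mp hInd.symm
  have hjoint : Measure.map (fun ω => ((∑ i, X i ω), X i0 ω)) P
      = Measure.map (fun p : ℝ × ℝ => (p.1 + p.2, p.1))
          (Measure.map (fun ω => (X i0 ω, T ω)) P) := by
    rw [Measure.map_map (by fun_prop) ((hXmeas i0).prodMk hTmeas)]
    congr 1
    funext ω
    simp only [Function.comp_apply]
    congr 1
    exact (Finset.add_sum_erase _ _ (Finset.mem_univ i0)).symm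
  have hSlaw : Measure.map (fun ω => ∑ i, X i ω) P
      = gaussianReal 0 (v + (M : ℝ≥0) * v) := by
    have := sum_law P v X hXmeas hXindep hXlaw Finset.univ
    rw [Finset.card_univ, Fintype.card_fin] at this
    rw [this]
    congr 1
    push_cast
    ring
  have hcc : ((v / (v + (M : ℝ≥0) * v) : ℝ≥0) : ℝ) = ((M + 1 : ℕ) : ℝ)⁻¹ := by
    push_cast
    rw [inv_eq_one_div, div_eq_div_iff (by positivity) (by positivity)]
    ring
  have hle : ((M + 1 : ℕ) : ℝ≥0)⁻¹ ≤ 1 := by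
    rw [← NNReal.coe_le_coe]
    push_cast
    rw [inv_le_one_iff₀]
    right
    exact_mod_cast Nat.le_add_left 1 M
  have h1 : (1 : ℝ≥0) - ((M + 1 : ℕ) : ℝ≥0)⁻¹ = (M : ℝ≥0) / ((M : ℝ≥0) + 1) := by
    apply NNReal.coe_injective
    rw [NNReal.coe_sub hle]
    push_cast
    rw [eq_div_iff (by positivity)]
    field_simp
    ring
  have hww : v * ((M : ℝ≥0) * v) / (v + (M : ℝ≥0) * v)
      = v * (1 - ((M + 1 : ℕ) : ℝ≥0)⁻¹) := by
    rw [h1]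
    apply NNReal.coe_injective
    push_cast
    have h2 : (v:ℝ) + M * v ≠ 0 := by positivity
    have h3 : (M:ℝ) + 1 ≠ 0 := by positivity
    field_simp
    ring
  have hκ : Measure.map (fun ω => ((∑ i, X i ω), X i0 ω)) P
      = Measure.map (fun ω => ∑ i, X i ω) P ⊗ₘ
          gKer (((M + 1 : ℕ) : ℝ)⁻¹) (v * (1 - ((M + 1 : ℕ) : ℝ≥0)⁻¹)) := by
    rw [hjoint, hpair, gauss_joint v ((M : ℝ≥0) * v) hv.ne', hSlaw, hcc, hww]
  have h := condDistrib_ae_eq_of_measure_eq_compProd_of_measurable (μ := P) hSmeas (hXmeas i0) hκ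
  filter_upwards [h] with s hs
  rw [hs, gKer_apply, inv_mul_eq_div]
end

section
/- For every k ∈ ℕ and all real numbers γ and x, He_k(γ·x) = Σ_{i=0}^{⌊k/2⌋} C(k, 2i) · ((2i)!/(2^i · i!)) · γ^{k−2i} · (γ² − 1)^i · He_{k−2i}(x), where C(k, 2i) is the binomial coefficient and (2i)!/(2^i·i!) is a natural number (the double factorial (2i−1)!!). -/
open Polynomial Finset Nat

private lemma hermite_deriv (n : ℕ) :
    derivative (hermite (n+1) : ℤ[X]) = (n+1) * hermite n := by
  induction n with
  | zero => simp [hermite_succ, hermite_zero]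
  | succ n ih =>
      rw [hermite_succ (n+1), derivative_sub, derivative_mul, derivative_X, one_mul, ih,
        derivative_mul]
      simp only [derivative_add, derivative_natCast, derivative_one, add_zero, zero_mul, zero_add]
      push_cast
      linear_combination (-(n:ℤ[X]) - 1) * (hermite_succ n)

private lemma hermite_rec (y : ℝ) (k : ℕ) :
    aeval y (hermite (k+2)) = y * aeval y (hermite (k+1)) - ((k:ℝ)+1) * aeval y (hermite k) := by
  rw [hermite_succ (k+1), hermite_deriv k]
  simp [mul_comm]

private lemma df_succ (i : ℕ) : (2*(i+1)-1)‼ = (2*i+1) * (2*i-1)‼ := by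
  rcases i with _ | j
  · rfl
  · rw [show 2*(j+1+1)-1 = (2*(j+1)-1)+2 by omega, Nat.doubleFactorial_add_two,
      show 2*(j+1)-1+2 = 2*(j+1)+1 by omega]

private lemma dfac_eq (i : ℕ) : (2*i)! / (2^i * i !) = (2*i-1)‼ := by
  rcases i with _ | j
  · rfl
  · rw [show 2*(j+1) = (2*j+1)+1 by omega, Nat.factorial_eq_mul_doubleFactorial,
      show (2*j+1)+1 = 2*(j+1) by omega, Nat.doubleFactorial_two_mul,
      Nat.mul_div_cancel_left _ (by positivity), show 2*(j+1)-1 = 2*j+1 by omega]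

private noncomputable def trm (γ x : ℝ) (k i : ℕ) : ℝ :=
  (k.choose (2*i) : ℝ) * ((2*i-1)‼ : ℕ) * γ^(k-2*i) * (γ^2-1)^i * aeval x (hermite (k-2*i))

private lemma trm_eq_zero {γ x : ℝ} {k i : ℕ} (h : k < 2*i) : trm γ x k i = 0 := by
  simp [trm, Nat.choose_eq_zero_of_lt h]

private noncomputable def Atm (γ x : ℝ) (k i : ℕ) : ℝ :=
  ((k+1).choose (2*i) : ℝ) * ((2*i-1)‼ : ℕ) * γ^(k+2-2*i) * (γ^2-1)^i
    * aeval x (hermite (k+2-2*i))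

private noncomputable def B1 (γ x : ℝ) (k i : ℕ) : ℝ :=
  ((k+1).choose (2*i) : ℝ) * ((2*i-1)‼ : ℕ) * ((k+1-2*i : ℕ) : ℝ) * γ^(k-2*i)
    * (γ^2-1)^(i+1) * aeval x (hermite (k-2*i))

private noncomputable def B2 (γ x : ℝ) (k i : ℕ) : ℝ :=
  ((k+1).choose (2*i) : ℝ) * ((2*i-1)‼ : ℕ) * ((k+1-2*i : ℕ) : ℝ) * γ^(k-2*i)
    * (γ^2-1)^i * aeval x (hermite (k-2*i))

private lemma xH (x : ℝ) (m : ℕ) :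
    x * aeval x (hermite m) = aeval x (hermite (m+1)) + m * aeval x (hermite (m-1)) := by
  rcases m with _ | n
  · simp [hermite_zero, hermite_one]
  · have h := hermite_rec x n
    push_cast
    linarith [h]

private lemma step1 (γ x : ℝ) (k i : ℕ) :
    γ * x * trm γ x (k+1) i = Atm γ x k i + B1 γ x k i + B2 γ x k i := by
  rcases le_or_gt (2*i) (k+1) with h | h
  · rcases eq_or_lt_of_le h with h1 | h1
    · -- 2*i = k+1
      unfold trm Atm B1 B2
      rw [show k+1-2*i = 0 by omega, show k+2-2*i = 1 by omega]
      simp only [Nat.cast_zero, pow_zero]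
      simp [hermite_zero, hermite_one]
      ring
    · -- 2*i ≤ k
      have hk : 2*i ≤ k := by omega
      unfold trm Atm B1 B2
      have e1 : k+1-2*i = (k-2*i)+1 := by omega
      have e2 : k+2-2*i = (k-2*i)+2 := by omega
      have hx := xH x ((k-2*i)+1)
      rw [show (k-2*i)+1-1 = k-2*i from rfl] at hx
      rw [e1, e2]
      push_cast at hx ⊢
      linear_combination (((k+1).choose (2*i) : ℝ) * ((2*i-1)‼ : ℕ)
        * γ^(k-2*i+1) * γ * (γ^2-1)^i) * hx
  · -- 2*i > k+1 : choose = 0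
    unfold trm Atm B1 B2
    rw [Nat.choose_eq_zero_of_lt h]
    push_cast
    ring

private lemma step2 (γ x : ℝ) (k i : ℕ) : B2 γ x k i = ((k:ℝ)+1) * trm γ x k i := by
  unfold B2 trm
  have h := Nat.choose_mul_succ_eq k (2*i)
  have h' := congrArg (fun n : ℕ => (n : ℝ)) h
  push_cast at h'
  linear_combination (-(((2*i-1)‼ : ℕ) * γ^(k-2*i) * (γ^2-1)^i
    * aeval x (hermite (k-2*i)))) * h'

private lemma step3 (γ x : ℝ) (k i : ℕ) :
    trm γ x (k+2) (i+1) = Atm γ x k (i+1) + B1 γ x k i := by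
  unfold trm Atm B1
  have e1 : k+2-2*(i+1) = k-2*i := by omega
  rw [e1]
  have epascal : (k+2).choose (2*(i+1)) = (k+1).choose (2*i+1) + (k+1).choose (2*(i+1)) := by
    have h := Nat.choose_succ_succ (k+1) (2*i+1)
    simpa [show (2*i+1)+1 = 2*(i+1) by ring] using h
  have ecsr := Nat.choose_succ_right_eq (k+1) (2*i)
  have key : (k+1).choose (2*i+1) * (2*(i+1)-1)‼
      = (k+1).choose (2*i) * (2*i-1)‼ * (k+1-2*i) := by
    rw [df_succ]
    calc (k+1).choose (2*i+1) * ((2*i+1) * (2*i-1)‼)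
        = ((k+1).choose (2*i+1) * (2*i+1)) * (2*i-1)‼ := by ring
      _ = ((k+1).choose (2*i) * (k+1-2*i)) * (2*i-1)‼ := by rw [ecsr]
      _ = (k+1).choose (2*i) * (2*i-1)‼ * (k+1-2*i) := by ring
  have key' := congrArg (fun n : ℕ => (n : ℝ)) key
  push_cast at key'
  rw [epascal]
  push_cast
  linear_combination (γ^(k-2*i) * (γ^2-1)^(i+1) * aeval x (hermite (k-2*i))) * key'

private lemma sum_main (γ x : ℝ) (k : ℕ) :
    aeval (γ*x) (hermite k) = ∑ i ∈ range (k+1), trm γ x k i := by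
  induction k using Nat.twoStepInduction with
  | zero => simp [trm, hermite_zero]
  | one =>
      rw [Finset.sum_range_succ, trm_eq_zero (k := 1) (i := 1) (by norm_num), add_zero,
        Finset.sum_range_one]
      unfold trm
      norm_num [hermite_one]
  | more k ih1 ih2 =>
      have ext : ∀ (m n : ℕ), m ≤ n →
          ∑ i ∈ range (m+1), trm γ x m i = ∑ i ∈ range (n+1), trm γ x m i := by
        intro m n hmn
        apply Finset.sum_subset
        · exact Finset.range_subset_range.2 (by omega)
        · intro i hi hni
          simp only [Finset.mem_range] at hi hni
          exact trm_eq_zero (by omega)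
      rw [hermite_rec, ih1, ih2, ext k (k+2) (by omega), ext (k+1) (k+2) (by omega)]
      have hsum1 : γ*x * ∑ i ∈ range (k+2+1), trm γ x (k+1) i
          = (∑ i ∈ range (k+2+1), Atm γ x k i) + (∑ i ∈ range (k+2+1), B1 γ x k i)
            + ∑ i ∈ range (k+2+1), B2 γ x k i := by
        rw [Finset.mul_sum, ← Finset.sum_add_distrib, ← Finset.sum_add_distrib]
        exact Finset.sum_congr rfl fun i _ => step1 γ x k i
      have hsum2 : ∑ i ∈ range (k+2+1), B2 γ x k i
          = ((k:ℝ)+1) * ∑ i ∈ range (k+2+1), trm γ x k i := by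
        rw [Finset.mul_sum]
        exact Finset.sum_congr rfl fun i _ => step2 γ x k i
      have hB1top : B1 γ x k (k+2) = 0 := by
        unfold B1
        rw [Nat.choose_eq_zero_of_lt (by omega)]
        push_cast; ring
      have h0 : trm γ x (k+2) 0 = Atm γ x k 0 := by
        simp [trm, Atm]
      have hL : ∑ i ∈ range (k+2+1), trm γ x (k+2) i
          = (∑ i ∈ range (k+2+1), Atm γ x k i) + ∑ i ∈ range (k+2+1), B1 γ x k i := by
        calc ∑ i ∈ range (k+2+1), trm γ x (k+2) i
            = (∑ i ∈ range (k+2), trm γ x (k+2) (i+1)) + trm γ x (k+2) 0 :=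
              Finset.sum_range_succ' _ (k+2)
          _ = (∑ i ∈ range (k+2), (Atm γ x k (i+1) + B1 γ x k i)) + Atm γ x k 0 := by
              rw [h0, Finset.sum_congr rfl fun i _ => step3 γ x k i]
          _ = ((∑ i ∈ range (k+2), Atm γ x k (i+1)) + Atm γ x k 0)
              + ∑ i ∈ range (k+2), B1 γ x k i := by
              rw [Finset.sum_add_distrib]; ring
          _ = (∑ i ∈ range (k+2+1), Atm γ x k i) + ∑ i ∈ range (k+2+1), B1 γ x k i := by
              rw [← Finset.sum_range_succ' (Atm γ x k) (k+2),
                Finset.sum_range_succ (B1 γ x k) (k+2), hB1top, add_zero]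
      linarith [hsum1, hsum2, hL]

/-- Multiplication theorem for probabilists' Hermite polynomials:
`He_k(γx) = Σ_{i=0}^{⌊k/2⌋} C(k,2i) ((2i)!/(2^i i!)) γ^{k−2i} (γ²−1)^i He_{k−2i}(x)`. -/
theorem stmt_17 (k : ℕ) (γ x : ℝ) :
    aeval (γ * x) (hermite k)
      = ∑ i ∈ Finset.range (k / 2 + 1),
          (k.choose (2 * i) : ℝ) * (((2 * i).factorial / (2 ^ i * i.factorial) : ℕ) : ℝ)
            * γ ^ (k - 2 * i) * (γ ^ 2 - 1) ^ i * aeval x (hermite (k - 2 * i)) := by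
  rw [sum_main]
  rw [show ∑ i ∈ Finset.range (k/2+1),
        (k.choose (2 * i) : ℝ) * (((2 * i).factorial / (2 ^ i * i.factorial) : ℕ) : ℝ)
          * γ ^ (k - 2 * i) * (γ ^ 2 - 1) ^ i * aeval x (hermite (k - 2 * i))
      = ∑ i ∈ Finset.range (k/2+1), trm γ x k i from
    Finset.sum_congr rfl fun i _ => by rw [trm, dfac_eq]]
  symm
  apply Finset.sum_subset
  · exact Finset.range_subset_range.2 (by omega)
  · intro i hi hni
    simp only [Finset.mem_range] at hi hni
    exact trm_eq_zero (by omega)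
end
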